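/- arXiv:0711.1082 — 7 statements merged into one kernel-verified Lean document; each statement's English description precedes it below -/
import Mathlib

section
/- Let (W, W') be an exchangeable pair of ℝ^d-valued random vectors with E[W] = 0, positive definite covariance Σ = E[W Wᵗ], and E[W' - W | W] = -Λ W for an invertible d×d matrix Λ (remainder R = 0). Then the matrix Σ^{-1/2} Λ Σ^{1/2} is symmetric. -/
open MeasureTheory ProbabilityTheory Matrix

lemma memLp_two_integrable_mul {Ω : Type*} [MeasurableSpace Ω] {μ : Measure Ω}
    {f g : Ω → ℝ} (hf : MemLp f 2 μ) (hg : MemLp g 2 μ) :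
    Integrable (fun ω => f ω * g ω) μ := by
  have h := hf.smul (φ := g) hg (r := 1)
  rw [← memLp_one_iff_integrable]
  exact (by simpa [smul_eq_mul, mul_comm] using h : MemLp (f * g) 1 μ)

/-- For an exchangeable pair with `E W = 0`, positive definite covariance `Sig`,
`E[W' - W | W] = -Λ W` with `Λ` invertible, the matrix `Sig^{-1/2} Λ Σ^{1/2}` is symmetric.
Here `Q` is the (unique) symmetric positive definite square root of `Σ`. -/
theorem lambda_hat_symm_of_exchangeable
    {Ω : Type*} [MeasurableSpace Ω] (μ : Measure Ω) [IsProbabilityMeasure μ]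
    (d : ℕ) (W W' : Ω → (Fin d → ℝ)) (Λ Sig Q : Matrix (Fin d) (Fin d) ℝ)
    (hWmeas : Measurable W) (hW'meas : Measurable W')
    (hexch : Measure.map (fun ω => (W ω, W' ω)) μ = Measure.map (fun ω => (W' ω, W ω)) μ)
    (hmean : ∀ i, ∫ ω, W ω i ∂μ = 0)
    (hSig : Sig.PosDef)
    (hcov : ∀ i j, ∫ ω, W ω i * W ω j ∂μ = Sig i j)
    (hWL2 : ∀ i, MemLp (fun ω => W ω i) 2 μ)
    (hW'L2 : ∀ i, MemLp (fun ω => W' ω i) 2 μ)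
    (hΛ : IsUnit Λ.det)
    (hQ : Q.PosDef) (hQsq : Q * Q = Sig)
    (hcond : ∀ i, μ[(fun ω => W' ω i - W ω i) | MeasurableSpace.comap W inferInstance]
        =ᵐ[μ] fun ω => -(Λ.mulVec (W ω)) i) :
    (Q⁻¹ * Λ * Q).IsSymm := by
  have hm : MeasurableSpace.comap W inferInstance ≤ ‹MeasurableSpace Ω› := hWmeas.comap_le
  -- W is m-measurable
  have hWm : Measurable[MeasurableSpace.comap W inferInstance] W := fun s hs => ⟨s, hs, rfl⟩
  -- key : ∫ W'_i W_j = Sig i j - (Λ * Sig) i j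
  have key : ∀ i j, ∫ ω, W' ω i * W ω j ∂μ = Sig i j - (Λ * Sig) i j := by
    intro i j
    have hdiffL2 : MemLp (fun ω => W' ω i - W ω i) 2 μ := (hW'L2 i).sub (hWL2 i)
    have hint : Integrable (fun ω => W ω j * (W' ω i - W ω i)) μ :=
      memLp_two_integrable_mul (hWL2 j) hdiffL2
    have hgm : StronglyMeasurable[MeasurableSpace.comap W inferInstance] (fun ω => W ω j) :=
      ((measurable_pi_apply j).comp hWm).stronglyMeasurable
    have hinteg : Integrable (fun ω => W' ω i - W ω i) μ :=
      hdiffL2.integrable (by norm_num)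
    have hpull := condExp_mul_of_stronglyMeasurable_left (m := MeasurableSpace.comap W inferInstance) (μ := μ) hgm
      (f := fun ω => W ω j) (g := fun ω => W' ω i - W ω i) hint hinteg
    have h1 : ∫ ω, W ω j * (W' ω i - W ω i) ∂μ
        = ∫ ω, W ω j * (-(Λ.mulVec (W ω)) i) ∂μ := by
      rw [← integral_condExp hm (f := fun ω => W ω j * (W' ω i - W ω i))]
      refine integral_congr_ae (hpull.trans ?_)
      filter_upwards [hcond i] with ω hω
      simp only [Pi.mul_apply]
      rw [hω]
    have h2 : ∫ ω, W ω j * (-(Λ.mulVec (W ω)) i) ∂μ = -(Λ * Sig) i j := by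
      have hexp : ∀ ω, W ω j * (-(Λ.mulVec (W ω)) i)
          = -∑ k, Λ i k * (W ω k * W ω j) := by
        intro ω
        simp only [Matrix.mulVec, dotProduct, neg_mul, mul_neg, Finset.mul_sum,
          Finset.sum_mul, neg_inj]
        exact Finset.sum_congr rfl fun k _ => by ring
      simp_rw [hexp]
      rw [integral_neg, integral_finset_sum]
      · congr 1
        rw [Matrix.mul_apply]
        refine Finset.sum_congr rfl fun k _ => ?_
        rw [integral_const_mul, hcov]
      · intro k _
        exact (memLp_two_integrable_mul (hWL2 k) (hWL2 j)).const_mul _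
    have h3 : ∫ ω, W ω j * (W' ω i - W ω i) ∂μ
        = ∫ ω, W' ω i * W ω j ∂μ - Sig i j := by
      have : ∀ ω, W ω j * (W' ω i - W ω i) = W' ω i * W ω j - W ω i * W ω j := by
        intro ω; ring
      simp_rw [this]
      rw [integral_sub (memLp_two_integrable_mul (hW'L2 i) (hWL2 j))
        (memLp_two_integrable_mul (hWL2 i) (hWL2 j)), hcov]
    have h4 : ∫ ω, W' ω i * W ω j ∂μ - Sig i j = -(Λ * Sig) i j := by
      rw [← h3, h1, h2]
    linarith
  -- exchangeability gives symmetry of ∫ W'_i W_j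
  have hex : ∀ i j, ∫ ω, W' ω i * W ω j ∂μ = ∫ ω, W ω i * W' ω j ∂μ := by
    intro i j
    have hF : Measurable (fun p : (Fin d → ℝ) × (Fin d → ℝ) => p.1 i * p.2 j) :=
      ((measurable_pi_apply i).comp measurable_fst).mul
        ((measurable_pi_apply j).comp measurable_snd)
    have h1 : ∫ ω, W' ω i * W ω j ∂μ
        = ∫ p, p.1 i * p.2 j ∂(Measure.map (fun ω => (W' ω, W ω)) μ) := by
      rw [integral_map (hW'meas.prodMk hWmeas).aemeasurable hF.aestronglyMeasurable]
    have h2 : ∫ ω, W ω i * W' ω j ∂μ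
        = ∫ p, p.1 i * p.2 j ∂(Measure.map (fun ω => (W ω, W' ω)) μ) := by
      rw [integral_map (hWmeas.prodMk hW'meas).aemeasurable hF.aestronglyMeasurable]
    rw [h1, h2, hexch]
  -- Sig is symmetric
  have hSigSymm : Sig.IsSymm := by
    have h := hSig.isHermitian
    rw [Matrix.IsHermitian, Matrix.conjTranspose] at h
    rw [Matrix.IsSymm]
    simpa [show (⇑(starRingEnd ℝ) : ℝ → ℝ) = id from funext fun x => star_trivial x] using h
  -- Λ * Sig is symmetric
  have hLS : (Λ * Sig).IsSymm := by
    rw [Matrix.IsSymm.ext_iff]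
    intro i j
    have e1 := key i j
    have e2 := key j i
    have e3 : ∫ ω, W' ω j * W ω i ∂μ = ∫ ω, W' ω i * W ω j ∂μ := by
      rw [hex j i]
      exact integral_congr_ae (Filter.Eventually.of_forall fun ω => mul_comm _ _)
    have hs : Sig i j = Sig j i := by
      rw [← hcov, ← hcov]
      exact integral_congr_ae (Filter.Eventually.of_forall fun ω => mul_comm _ _)
    rw [e1, e2] at e3
    linarith
  -- Q facts
  have hQsym : Qᵀ = Q := by
    have h := hQ.isHermitian
    rw [Matrix.IsHermitian, Matrix.conjTranspose] at h
    simpa [show (⇑(starRingEnd ℝ) : ℝ → ℝ) = id from funext fun x => star_trivial x] using h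
  have hQunit : IsUnit Q.det := isUnit_iff_ne_zero.mpr hQ.det_pos.ne'
  have hQQ : Sig * Λᵀ = Λ * Sig := by
    have h := hLS
    rw [Matrix.IsSymm, Matrix.transpose_mul, hSigSymm] at h
    exact h
  rw [← hQsq] at hQQ
  -- finish
  have hL : Q⁻¹ * (Λ * (Q * Q)) * Q⁻¹ = Q⁻¹ * Λ * Q := by
    simp only [Matrix.mul_assoc]
    rw [Matrix.mul_nonsing_inv _ hQunit, Matrix.mul_one]
  have hR : Q⁻¹ * (Q * Q * Λᵀ) * Q⁻¹ = Q * (Λᵀ * Q⁻¹) := by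
    simp only [Matrix.mul_assoc]
    rw [← Matrix.mul_assoc Q⁻¹ Q, Matrix.nonsing_inv_mul _ hQunit, Matrix.one_mul]
  rw [Matrix.IsSymm, Matrix.transpose_mul, Matrix.transpose_mul,
    Matrix.transpose_nonsing_inv, hQsym, ← hR, ← hL, hQQ]
end

section
/- Let Λ be a lower triangular real d×d matrix with inf_i |Λ_{ii}| = γ > 0 and |Λ_{ij}| ≤ a for all j < i (with a > 0). Then for every i, λ^{(i)} := Σ_{m=1}^d |(Λ^{-1})_{m,i}| satisfies λ^{(i)} ≤ (a/γ + 1)^{d-1} / γ. -/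
open Matrix

/-- For a lower triangular matrix `Λ` with diagonal entries at least `γ > 0` in
absolute value and strictly-lower entries bounded by `a`, the ℓ¹-norm of each column of
`Λ⁻¹` is at most `(a/γ + 1)^(d-1)/γ`. -/
theorem inverse_column_sum_bound_lower_triangular
    (d : ℕ) (Λ : Matrix (Fin d) (Fin d) ℝ)
    (hlow : ∀ i j : Fin d, i < j → Λ i j = 0)
    (γ a : ℝ) (hγ : 0 < γ) (ha : 0 < a)
    (hdiag : ∀ i, γ ≤ |Λ i i|)
    (hoff : ∀ i j : Fin d, j < i → |Λ i j| ≤ a) :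
    ∀ i : Fin d, ∑ m, |Λ⁻¹ m i| ≤ (a / γ + 1) ^ (d - 1) / γ := by
  -- basic facts
  have hBT : Λ.BlockTriangular OrderDual.toDual := fun p q h => hlow p q h
  have hdet : IsUnit Λ.det := by
    rw [Matrix.det_of_lowerTriangular Λ hBT]
    refine isUnit_iff_ne_zero.mpr (Finset.prod_ne_zero_iff.mpr fun p _ => ?_)
    intro h
    have := hdiag p
    rw [h, abs_zero] at this
    linarith
  haveI : Invertible Λ := Λ.invertibleOfIsUnitDet hdet
  have hinvBT : Λ⁻¹.BlockTriangular OrderDual.toDual :=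
    Matrix.blockTriangular_inv_of_blockTriangular hBT
  have hmul : Λ * Λ⁻¹ = 1 := Λ.mul_nonsing_inv hdet
  intro i
  set x : Fin d → ℝ := fun m => Λ⁻¹ m i with hxdef
  have hx0 : ∀ m : Fin d, m < i → x m = 0 := fun m hm => hinvBT hm
  set c : ℝ := a / γ + 1 with hc
  have hc1 : (1 : ℝ) ≤ c := by
    have : 0 < a / γ := div_pos ha hγ
    simp [hc]; linarith
  have hc0 : 0 < c := lt_of_lt_of_le one_pos hc1
  -- master inequality from forward substitution
  have master : ∀ m : Fin d,
      γ * |x m| ≤ (if m = i then (1:ℝ) else 0) +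
        a * ∑ k ∈ Finset.univ.filter (fun k => k < m), |x k| := by
    intro m
    have heq : ∑ k, Λ m k * x k = (if m = i then (1:ℝ) else 0) := by
      have := congrFun (congrFun hmul m) i
      rw [Matrix.mul_apply] at this
      simpa [Matrix.one_apply] using this
    have hsplit : ∑ k, Λ m k * x k =
        (∑ k ∈ Finset.univ.filter (fun k => k < m), Λ m k * x k) + Λ m m * x m := by
      rw [← Finset.sum_filter_add_sum_filter_not Finset.univ (fun k => k < m)
        (fun k => Λ m k * x k)]
      congr 1
      refine Finset.sum_eq_single_of_mem m (by simp) fun k hk hkm => ?_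
      have hk' : ¬ k < m := by simpa using hk
      have : m < k := lt_of_le_of_ne (not_lt.mp hk') (Ne.symm hkm)
      rw [hlow m k this, zero_mul]
    have hmx : Λ m m * x m =
        (if m = i then (1:ℝ) else 0) -
          ∑ k ∈ Finset.univ.filter (fun k => k < m), Λ m k * x k := by
      rw [← heq, hsplit]; ring
    have h1 : γ * |x m| ≤ |Λ m m * x m| := by
      rw [abs_mul]
      exact mul_le_mul_of_nonneg_right (hdiag m) (abs_nonneg _)
    have h2 : |Λ m m * x m| ≤ |(if m = i then (1:ℝ) else 0)| +
        |∑ k ∈ Finset.univ.filter (fun k => k < m), Λ m k * x k| := by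
      rw [hmx]; exact abs_sub _ _
    have h3 : |∑ k ∈ Finset.univ.filter (fun k => k < m), Λ m k * x k| ≤
        a * ∑ k ∈ Finset.univ.filter (fun k => k < m), |x k| := by
      calc |∑ k ∈ Finset.univ.filter (fun k => k < m), Λ m k * x k|
          ≤ ∑ k ∈ Finset.univ.filter (fun k => k < m), |Λ m k * x k| :=
            Finset.abs_sum_le_sum_abs _ _
        _ ≤ ∑ k ∈ Finset.univ.filter (fun k => k < m), a * |x k| := by
            refine Finset.sum_le_sum fun k hk => ?_
            rw [abs_mul]
            exact mul_le_mul_of_nonneg_right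
              (hoff m k (by simpa using hk)) (abs_nonneg _)
        _ = a * ∑ k ∈ Finset.univ.filter (fun k => k < m), |x k| := by
            rw [Finset.mul_sum]
      -- done
    have habsδ : |(if m = i then (1:ℝ) else 0)| = (if m = i then (1:ℝ) else 0) := by
      split <;> simp
    calc γ * |x m| ≤ |Λ m m * x m| := h1
      _ ≤ _ := h2
      _ ≤ (if m = i then (1:ℝ) else 0) +
          a * ∑ k ∈ Finset.univ.filter (fun k => k < m), |x k| := by
          rw [habsδ]; linarith
  -- ℕ-indexed partial sums
  set y : ℕ → ℝ := fun n => if h : n < d then |x ⟨n, h⟩| else 0 with hydef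
  have hy0 : ∀ n, 0 ≤ y n := by
    intro n; simp only [hydef]; split <;> simp [abs_nonneg]
  set T : ℕ → ℝ := fun n => ∑ j ∈ Finset.range n, y j with hTdef
  have hT0 : ∀ n, 0 ≤ T n := fun n => Finset.sum_nonneg fun j _ => hy0 j
  -- conversion of Fin-filtered sums to T
  have hconv : ∀ m : Fin d,
      ∑ k ∈ Finset.univ.filter (fun k => k < m), |x k| = T m.val := by
    intro m
    have h1 : ∀ k : Fin d, (if (k : ℕ) < m.val then y (k : ℕ) else 0)
        = if k < m then |x k| else 0 := by
      intro k
      by_cases h : k < m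
      · rw [if_pos (by exact_mod_cast h), if_pos h]
        simp only [hydef, dif_pos k.isLt]
      · rw [if_neg (by exact_mod_cast h), if_neg h]
    calc ∑ k ∈ Finset.univ.filter (fun k => k < m), |x k|
        = ∑ k : Fin d, if k < m then |x k| else 0 := by
          rw [Finset.sum_filter]
      _ = ∑ k : Fin d, (fun n => if n < m.val then y n else 0) (k : ℕ) := by
          refine Finset.sum_congr rfl fun k _ => ?_
          exact (h1 k).symm
      _ = ∑ n ∈ Finset.range d, (if n < m.val then y n else 0) :=
          Fin.sum_univ_eq_sum_range (fun n => if n < m.val then y n else 0) d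
      _ = ∑ n ∈ (Finset.range d).filter (fun n => n < m.val), y n := by
          rw [Finset.sum_filter]
      _ = T m.val := by
          have : (Finset.range d).filter (fun n => n < m.val) = Finset.range m.val := by
            ext n
            simp only [Finset.mem_filter, Finset.mem_range]
            have := m.isLt
            omega
          rw [this]
  -- per-index bounds
  have hyi : y i.val ≤ 1 / γ := by
    have hSi : T i.val = 0 := by
      rw [← hconv i]
      refine Finset.sum_eq_zero fun k hk => ?_
      rw [hx0 k (by simpa using hk), abs_zero]
    have := master i
    rw [if_pos rfl, hconv i, hSi, mul_zero, add_zero] at this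
    have hyival : y i.val = |x i| := by
      simp only [hydef, dif_pos i.isLt]
    rw [hyival]
    rw [le_div_iff₀ hγ]
    linarith [this]
  have hyne : ∀ n (hn : n < d), n ≠ i.val → y n ≤ (a / γ) * T n := by
    intro n hn hne
    have hm : (⟨n, hn⟩ : Fin d) ≠ i := by
      intro h; exact hne (by rw [← h])
    have := master ⟨n, hn⟩
    rw [if_neg hm, hconv ⟨n, hn⟩, zero_add] at this
    have hyval : y n = |x ⟨n, hn⟩| := by simp only [hydef, dif_pos hn]
    rw [hyval, div_mul_eq_mul_div, le_div_iff₀ hγ]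
    have hTeq : T (⟨n, hn⟩ : Fin d).val = T n := rfl
    rw [hTeq] at this
    nlinarith [abs_nonneg (x (⟨n, hn⟩ : Fin d))]
  -- main induction
  have main : ∀ n : ℕ, T n ≤ c ^ (n - (i.val + 1)) / γ ∧ (n ≤ i.val → T n = 0) := by
    intro n
    induction n with
    | zero =>
      constructor
      · have h0 : T 0 = 0 := by simp [hTdef]
        rw [h0]; positivity
      · intro _; simp [hTdef]
    | succ n ih =>
      have hTs : T (n + 1) = T n + y n := Finset.sum_range_succ y n
      by_cases hn : n < d
      · rcases lt_trichotomy n i.val with hni | hni | hni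
        · -- n < i : y n = 0 since x ⟨n⟩ = 0
          have hyn : y n = 0 := by
            have : (⟨n, hn⟩ : Fin d) < i := by
              rw [Fin.lt_def]; exact hni
            simp only [hydef, dif_pos hn, hx0 _ this, abs_zero]
          constructor
          · rw [hTs, hyn, add_zero]
            exact le_trans ih.1 (div_le_div_of_nonneg_right
              (pow_le_pow_right₀ hc1 (by omega)) hγ.le)
          · intro h
            rw [hTs, hyn, ih.2 (by omega), add_zero]
        · -- n = i
          have hTn : T n = 0 := ih.2 (le_of_eq hni)
          constructor
          · rw [hTs, hTn, zero_add]
            have : n + 1 - (i.val + 1) = 0 := by omega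
            rw [this, pow_zero]
            exact le_trans (hni ▸ hyi) (le_refl _)
          · intro h; omega
        · -- n > i
          constructor
          · have hb : y n ≤ (a / γ) * T n := hyne n hn (by omega)
            have : T (n + 1) ≤ c * T n := by
              rw [hTs, hc]
              have := hT0 n
              nlinarith
            calc T (n + 1) ≤ c * T n := this
              _ ≤ c * (c ^ (n - (i.val + 1)) / γ) :=
                mul_le_mul_of_nonneg_left ih.1 (le_of_lt hc0)
              _ = c ^ (n - (i.val + 1) + 1) / γ := by ring
              _ = c ^ (n + 1 - (i.val + 1)) / γ := by
                congr 2; omega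
          · intro h; omega
      · -- n ≥ d : y n = 0
        have hyn : y n = 0 := by simp only [hydef, dif_neg hn]
        constructor
        · rw [hTs, hyn, add_zero]
          exact le_trans ih.1 (div_le_div_of_nonneg_right
            (pow_le_pow_right₀ hc1 (by omega)) hγ.le)
        · intro h
          rw [hTs, hyn, ih.2 (by omega), add_zero]
  -- conclude
  have hsum : ∑ m, |x m| = T d := by
    have : ∀ m : Fin d, |x m| = y m.val := by
      intro m; simp only [hydef, dif_pos m.isLt]
    calc ∑ m, |x m| = ∑ m : Fin d, y (m : ℕ) := Finset.sum_congr rfl fun m _ => this m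
      _ = ∑ j ∈ Finset.range d, y j := Fin.sum_univ_eq_sum_range y d
  rw [hsum]
  calc T d ≤ c ^ (d - (i.val + 1)) / γ := (main d).1
    _ ≤ c ^ (d - 1) / γ := by
        apply div_le_div_of_nonneg_right _ hγ.le
        exact pow_le_pow_right₀ hc1 (by omega)
end

section
/- Let Λ_E be a lower triangular d×d real matrix with all diagonal entries equal to 1 and all strictly lower triangular entries bounded in absolute value by c ≥ 0. Then the matrix 1-norm of its inverse satisfies ‖Λ_E^{-1}‖₁ ≤ (c + 1)^{d-1}, where ‖A‖₁ = sup_j Σ_i |A_{ij}|. -/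
open Matrix Finset

/-- Lemeire's bound: For a unit lower triangular matrix `Λ_E` with strictly
lower entries bounded in absolute value by `c ≥ 0`, the maximum absolute column sum norm of
`Λ_E⁻¹` is at most `(c+1)^(d-1)`. -/
theorem inverse_one_norm_bound_unit_lower_triangular
    (d : ℕ) (ΛE : Matrix (Fin d) (Fin d) ℝ)
    (hlow : ∀ i j : Fin d, i < j → ΛE i j = 0)
    (hdiag : ∀ i, ΛE i i = 1)
    (c : ℝ) (hc : 0 ≤ c)
    (hoff : ∀ i j : Fin d, j < i → |ΛE i j| ≤ c) :
    ∀ j : Fin d, ∑ i, |ΛE⁻¹ i j| ≤ (c + 1) ^ (d - 1) := by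
  intro j
  have hbt : ΛE.BlockTriangular OrderDual.toDual := fun i k h => hlow i k h
  have hdet : ΛE.det = 1 := by
    rw [Matrix.det_of_lowerTriangular ΛE hbt]; simp [hdiag]
  have hu : IsUnit ΛE.det := by rw [hdet]; exact isUnit_one
  haveI : Invertible ΛE := ΛE.invertibleOfIsUnitDet hu
  set B := ΛE⁻¹ with hBdef
  have hBt : B.BlockTriangular OrderDual.toDual :=
    blockTriangular_inv_of_blockTriangular hbt
  have hBlow : ∀ k : Fin d, k < j → B k j = 0 := fun k hk => hBt hk
  have hmul : ΛE * B = 1 := Matrix.mul_nonsing_inv ΛE hu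
  -- the recurrence for entries of the inverse
  have hrec : ∀ i : Fin d, B i j = (if i = j then (1:ℝ) else 0) -
      ∑ k ∈ univ.filter (fun k : Fin d => k < i), ΛE i k * B k j := by
    intro i
    have h1 : ∑ k, ΛE i k * B k j = (if i = j then (1:ℝ) else 0) := by
      have := congrFun (congrFun hmul i) j
      simpa [Matrix.mul_apply, Matrix.one_apply] using this
    have h2 : ∑ k, ΛE i k * B k j =
        B i j + ∑ k ∈ univ.filter (fun k : Fin d => k < i), ΛE i k * B k j := by
      rw [← Finset.sum_erase_add _ _ (mem_univ i), hdiag, one_mul, add_comm]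
      congr 1
      refine (Finset.sum_subset ?_ ?_).symm
      · intro k hk
        simp only [mem_filter, mem_univ, true_and] at hk
        simp [ne_of_lt hk]
      · intro k hk hk2
        simp only [mem_erase, mem_univ, and_true] at hk
        simp only [mem_filter, mem_univ, true_and] at hk2
        have : i < k := lt_of_le_of_ne (not_lt.mp hk2) (Ne.symm hk)
        rw [hlow i k this, zero_mul]
    rw [h2] at h1
    linarith
  have hBjj : B j j = 1 := by
    rw [hrec j, if_pos rfl, Finset.sum_eq_zero, sub_zero]
    intro k hk
    simp only [mem_filter, mem_univ, true_and] at hk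
    rw [hBlow k hk, mul_zero]
  -- partial column sums
  set S : ℕ → ℝ := fun m => ∑ k ∈ univ.filter (fun k : Fin d => (k:ℕ) < m), |B k j|
    with hSdef
  have hSnonneg : ∀ m, 0 ≤ S m := fun m => Finset.sum_nonneg fun k _ => abs_nonneg _
  have hbound : ∀ i : Fin d, j < i → |B i j| ≤ c * S (i : ℕ) := by
    intro i hi
    rw [hrec i, if_neg (ne_of_gt hi), zero_sub, abs_neg]
    calc |∑ k ∈ univ.filter (fun k : Fin d => k < i), ΛE i k * B k j|
        ≤ ∑ k ∈ univ.filter (fun k : Fin d => k < i), |ΛE i k * B k j| :=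
          Finset.abs_sum_le_sum_abs _ _
      _ ≤ ∑ k ∈ univ.filter (fun k : Fin d => k < i), c * |B k j| := by
          refine Finset.sum_le_sum fun k hk => ?_
          simp only [mem_filter, mem_univ, true_and] at hk
          rw [abs_mul]
          exact mul_le_mul_of_nonneg_right (hoff i k hk) (abs_nonneg _)
      _ = c * S (i : ℕ) := by
          rw [hSdef, Finset.mul_sum]
          apply Finset.sum_congr
          · apply Finset.filter_congr
            intro k _
            exact Fin.lt_def
          · intros; rfl
  -- step formula
  have hstep : ∀ m (hm : m < d), S (m + 1) = S m + |B ⟨m, hm⟩ j| := by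
    intro m hm
    have hins : univ.filter (fun k : Fin d => (k:ℕ) < m + 1) =
        insert (⟨m, hm⟩ : Fin d) (univ.filter (fun k : Fin d => (k:ℕ) < m)) := by
      ext k
      simp only [mem_filter, mem_univ, true_and, mem_insert, Fin.ext_iff]
      omega
    rw [hSdef]
    simp only []
    rw [hins, Finset.sum_insert (by simp), add_comm]
  have hSzero : ∀ m, m ≤ (j : ℕ) → S m = 0 := by
    intro m hm
    apply Finset.sum_eq_zero
    intro k hk
    simp only [mem_filter, mem_univ, true_and] at hk
    rw [hBlow k (by rw [Fin.lt_def]; omega), abs_zero]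
  -- main induction
  have hmain : ∀ m, m ≤ d → (j : ℕ) < m → S m ≤ (c + 1) ^ (m - 1 - (j : ℕ)) := by
    intro m
    induction m with
    | zero => omega
    | succ m ih =>
      intro hmd hjm
      have hm : m < d := hmd
      rw [hstep m hm]
      rcases eq_or_lt_of_le (Nat.lt_succ_iff.mp hjm) with heq | hlt
      · -- m = j
        have hkj : (⟨m, hm⟩ : Fin d) = j := by
          exact Fin.ext heq.symm
        rw [hSzero m (by omega), hkj, hBjj, zero_add, abs_one]
        exact one_le_pow₀ (by linarith)
      · -- j < m
        have hji : j < (⟨m, hm⟩ : Fin d) := by rw [Fin.lt_def]; exact hlt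
        -- ok
        have h1 : |B ⟨m, hm⟩ j| ≤ c * S m := hbound _ hji
        have h2 : S m ≤ (c + 1) ^ (m - 1 - (j : ℕ)) := ih (by omega) hlt
        have hexp : m + 1 - 1 - (j : ℕ) = (m - 1 - (j : ℕ)) + 1 := by omega
        rw [hexp, pow_succ]
        have : S m + |B ⟨m, hm⟩ j| ≤ (1 + c) * S m := by nlinarith [hSnonneg m]
        calc S m + |B ⟨m, hm⟩ j| ≤ (1 + c) * S m := this
          _ ≤ (c + 1) ^ (m - 1 - (j : ℕ)) * (c + 1) := by
              rw [mul_comm]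
              have h3 : (0:ℝ) ≤ c + 1 := by linarith
              nlinarith [hSnonneg m]
  -- finish
  have hfin : ∑ i, |B i j| = S d := by
    rw [hSdef]
    apply Finset.sum_congr
    · ext k; simp [k.isLt]
    · intros; rfl
  rw [hfin]
  have hd : (j : ℕ) < d := j.isLt
  calc S d ≤ (c + 1) ^ (d - 1 - (j : ℕ)) := hmain d le_rfl hd
    _ ≤ (c + 1) ^ (d - 1) := by
        apply pow_le_pow_right₀ (by linarith)
        omega
end

section
/- Let ξ₁, …, ξₙ be i.i.d. Bernoulli(p) random variables with 0 < p < 1 and cyclic convention ξ_{n+k} := ξ_k. For d ≥ 1 define V_d := Σ_{m=1}^n (ξ_m ξ_{m+1} ⋯ ξ_{m+d-1} - p^d). Then E[V_d²] = n p^d (1-p) Σ_{k=0}^{d-1} (1 + 2k) p^k. -/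
open MeasureTheory Fin.NatCast

lemma integrable_dirac' {f : ℝ → ℝ} (a : ℝ) : Integrable f (Measure.dirac a) :=
  (integrable_const (f a)).congr (ae_eq_dirac f).symm

lemma bern_integrable (p : ℝ) (f : ℝ → ℝ) :
    Integrable f (ENNReal.ofReal p • Measure.dirac (1:ℝ) + ENNReal.ofReal (1-p) • Measure.dirac 0) := by
  refine Integrable.add_measure ?_ ?_ <;>
  exact (integrable_dirac' _).smul_measure (by simp)

lemma bern_moment (p : ℝ) (hp0 : 0 ≤ p) (hp1 : p ≤ 1) (k : ℕ) :
    ∫ x, x ^ k ∂(ENNReal.ofReal p • Measure.dirac (1:ℝ) + ENNReal.ofReal (1-p) • Measure.dirac 0)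
      = if k = 0 then 1 else p := by
  rw [integral_add_measure ((integrable_dirac' _).smul_measure (by simp))
      ((integrable_dirac' _).smul_measure (by simp)),
    integral_smul_measure, integral_smul_measure, integral_dirac, integral_dirac]
  rcases Nat.eq_zero_or_pos k with hk | hk
  · subst hk; simp [ENNReal.toReal_ofReal, hp0, (by linarith : (0:ℝ) ≤ 1 - p)]
  · rw [if_neg hk.ne', one_pow, zero_pow hk.ne']
    simp [ENNReal.toReal_ofReal, hp0, (by linarith : (0:ℝ) ≤ 1 - p)]

lemma my_integral_pi {n : ℕ} (μ : Measure ℝ) [SigmaFinite μ] (f : Fin n → ℝ → ℝ) :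
    ∫ ω : Fin n → ℝ, ∏ i, f i (ω i) ∂(Measure.pi fun _ => μ) = ∏ i, ∫ x, f i x ∂μ := by
  letI : MeasureSpace ℝ := ⟨μ⟩
  haveI : SigmaFinite (volume : Measure ℝ) := ‹_›
  exact integral_fintype_prod_eq_prod (ι := Fin n) f

lemma my_integrable_pi {n : ℕ} (μ : Measure ℝ) [SigmaFinite μ] (f : Fin n → ℝ → ℝ)
    (hf : ∀ i, Integrable (f i) μ) :
    Integrable (fun ω : Fin n → ℝ => ∏ i, f i (ω i)) (Measure.pi fun _ => μ) := by
  letI : MeasureSpace ℝ := ⟨μ⟩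
  haveI : SigmaFinite (volume : Measure ℝ) := ‹_›
  exact Integrable.fintype_prod hf

-- rewrite products over finsets as full products of powers
lemma prod_pair_rep {n : ℕ} (S T : Finset (Fin n)) (ω : Fin n → ℝ) :
    (∏ i ∈ S, ω i) * (∏ i ∈ T, ω i)
      = ∏ i : Fin n, (ω i) ^ ((if i ∈ S then 1 else 0) + (if i ∈ T then 1 else 0) : ℕ) := by
  have h : ∀ (U : Finset (Fin n)), ∏ i : Fin n, (ω i) ^ (if i ∈ U then 1 else 0 : ℕ)
      = ∏ i ∈ U, ω i := by
    intro U
    simp_rw [pow_ite, pow_one, pow_zero]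
    rw [Finset.prod_ite_mem, Finset.univ_inter]
  simp_rw [pow_add]
  rw [Finset.prod_mul_distrib, h S, h T]

lemma bern_finite (p : ℝ) : IsFiniteMeasure
    (ENNReal.ofReal p • Measure.dirac (1:ℝ) + ENNReal.ofReal (1-p) • Measure.dirac 0) := by
  constructor
  simp only [Measure.add_apply, Measure.smul_apply, smul_eq_mul]
  exact ENNReal.add_lt_top.2 ⟨ENNReal.mul_lt_top ENNReal.ofReal_lt_top (by simp),
    ENNReal.mul_lt_top ENNReal.ofReal_lt_top (by simp)⟩

lemma pair_moment {n : ℕ} (p : ℝ) (hp0 : 0 ≤ p) (hp1 : p ≤ 1) (S T : Finset (Fin n)) :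
    ∫ ω : Fin n → ℝ, (∏ i ∈ S, ω i) * (∏ i ∈ T, ω i)
      ∂(Measure.pi fun _ => (ENNReal.ofReal p • Measure.dirac (1:ℝ) + ENNReal.ofReal (1-p) • Measure.dirac 0))
      = p ^ (S ∪ T).card := by
  have hrep : ∀ ω : Fin n → ℝ, (∏ i ∈ S, ω i) * (∏ i ∈ T, ω i)
      = ∏ i : Fin n, (ω i) ^ ((if i ∈ S then 1 else 0) + (if i ∈ T then 1 else 0) : ℕ) :=
    prod_pair_rep S T
  calc ∫ ω : Fin n → ℝ, (∏ i ∈ S, ω i) * (∏ i ∈ T, ω i)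
      ∂(Measure.pi fun _ => (ENNReal.ofReal p • Measure.dirac (1:ℝ) + ENNReal.ofReal (1-p) • Measure.dirac 0))
      = ∏ i : Fin n, ∫ x : ℝ, x ^ ((if i ∈ S then 1 else 0) + (if i ∈ T then 1 else 0) : ℕ)
          ∂(ENNReal.ofReal p • Measure.dirac (1:ℝ) + ENNReal.ofReal (1-p) • Measure.dirac 0) := by
        simp_rw [hrep]
        haveI := bern_finite p
        exact my_integral_pi _ _
    _ = ∏ i : Fin n, (if i ∈ S ∪ T then p else 1) := by
        refine Finset.prod_congr rfl fun i _ => ?_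
        rw [bern_moment p hp0 hp1]
        by_cases hS : i ∈ S <;> by_cases hT : i ∈ T <;> simp [hS, hT]
    _ = p ^ (S ∪ T).card := by
        rw [Finset.prod_ite_mem, Finset.univ_inter, Finset.prod_const]

lemma pair_integrable {n : ℕ} (p : ℝ) (S T : Finset (Fin n)) :
    Integrable (fun ω : Fin n → ℝ => (∏ i ∈ S, ω i) * (∏ i ∈ T, ω i))
      (Measure.pi fun _ => (ENNReal.ofReal p • Measure.dirac (1:ℝ) + ENNReal.ofReal (1-p) • Measure.dirac 0)) := by
  simp_rw [prod_pair_rep S T]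
  haveI := bern_finite p
  exact my_integrable_pi _ _ fun i => bern_integrable p _

variable {n d : ℕ} [NeZero n]

def runSet (d : ℕ) (n : ℕ) [NeZero n] (m : Fin n) : Finset (Fin n) :=
  (Finset.range d).image (fun l : ℕ => m + (l : Fin n))

lemma natCast_injOn_range {a : ℕ} (ha : a ≤ n) :
    Set.InjOn (fun l : ℕ => (l : Fin n)) (Finset.range a : Set ℕ) := by
  intro x hx y hy hxy
  simp only [Finset.coe_range, Set.mem_Iio] at hx hy
  have := congrArg Fin.val hxy
  simpa [Fin.val_cast_of_lt (lt_of_lt_of_le hx ha), Fin.val_cast_of_lt (lt_of_lt_of_le hy ha)] using this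

lemma runSet_injOn (hdn : d ≤ n) (m : Fin n) :
    Set.InjOn (fun l : ℕ => m + (l : Fin n)) (Finset.range d : Set ℕ) := by
  intro x hx y hy hxy
  simp only [Finset.coe_range, Set.mem_Iio] at hx hy
  have : (x : Fin n) = (y : Fin n) := by
    have := hxy; simpa using add_left_cancel this
  exact natCast_injOn_range le_rfl (by simpa using lt_of_lt_of_le hx hdn)
    (by simpa using lt_of_lt_of_le hy hdn) this

lemma prod_runSet (hdn : d ≤ n) (m : Fin n) (ω : Fin n → ℝ) :
    ∏ l ∈ Finset.range d, ω (m + (l : Fin n)) = ∏ i ∈ runSet d n m, ω i :=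
  (Finset.prod_image fun x hx y hy h => runSet_injOn hdn m (by simpa using hx) (by simpa using hy) h).symm

lemma card_runSet (hdn : d ≤ n) (m : Fin n) : (runSet d n m).card = d := by
  rw [runSet, Finset.card_image_of_injOn (by simpa using runSet_injOn hdn m), Finset.card_range]

lemma runSet_eq_image (m j : Fin n) :
    runSet d n (m + j) = (runSet d n j).image (fun x => m + x) := by
  simp only [runSet, Finset.image_image]
  refine Finset.image_congr fun x _ => by simp [add_assoc]

lemma card_union_shift (m m' : Fin n) :
    (runSet d n m ∪ runSet d n m').card = (runSet d n 0 ∪ runSet d n (m' - m)).card := by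
  have h0 : runSet d n m = (runSet d n 0).image (fun x => m + x) := by
    simpa using runSet_eq_image (n := n) (d := d) m 0
  have h1 : runSet d n m' = (runSet d n (m' - m)).image (fun x => m + x) := by
    have := runSet_eq_image (n := n) (d := d) m (m' - m)
    rwa [add_sub_cancel] at this
  rw [h0, h1, ← Finset.image_union,
    Finset.card_image_of_injective _ (add_right_injective m)]

lemma runSet_zero_eq : runSet d n 0 = (Finset.range d).image (fun l : ℕ => (l : Fin n)) := by
  simp [runSet]

lemma card_union_zero_of_le (hdn : d ≤ n) {j : Fin n} (h : j.val + d ≤ n) :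
    (runSet d n 0 ∪ runSet d n j).card = d + min j.val d := by
  set t := j.val with ht
  have hj : runSet d n j = ((Finset.range d).image (fun l => t + l)).image (fun a : ℕ => (a : Fin n)) := by
    rw [runSet, Finset.image_image]
    refine Finset.image_congr fun x _ => ?_
    simp only [Function.comp_apply, Nat.cast_add, ht, Fin.cast_val_eq_self]
  rw [runSet_zero_eq, hj, ← Finset.image_union]
  have hsub : ∀ a ∈ Finset.range d ∪ (Finset.range d).image (fun l => t + l), a < n := by
    intro a ha
    rcases Finset.mem_union.1 ha with ha | ha
    · exact lt_of_lt_of_le (Finset.mem_range.1 ha) hdn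
    · obtain ⟨l, hl, rfl⟩ := Finset.mem_image.1 ha
      have := Finset.mem_range.1 hl; omega
  rw [Finset.card_image_of_injOn (fun x hx y hy hxy =>
    natCast_injOn_range le_rfl (by simpa using hsub x hx) (by simpa using hsub y hy) hxy)]
  rcases lt_or_ge t d with htd | htd
  · have : Finset.range d ∪ (Finset.range d).image (fun l => t + l) = Finset.range (t + d) := by
      ext a
      simp only [Finset.mem_union, Finset.mem_range, Finset.mem_image]
      constructor
      · rintro (h | ⟨l, hl, rfl⟩) <;> omega
      · intro ha
        rcases lt_or_ge a d with h' | h'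
        · exact Or.inl h'
        · exact Or.inr ⟨a - t, by omega, by omega⟩
    rw [this, Finset.card_range]
    omega
  · rw [Finset.card_union_of_disjoint, Finset.card_range,
      Finset.card_image_of_injOn (fun x _ y _ h => by omega), Finset.card_range]
    · omega
    · rw [Finset.disjoint_left]
      intro a ha ha'
      obtain ⟨l, hl, rfl⟩ := Finset.mem_image.1 ha'
      have := Finset.mem_range.1 ha; omega

lemma card_union_zero (hd : 1 ≤ d) (hn : 2 * d ≤ n) (j : Fin n) :
    (runSet d n 0 ∪ runSet d n j).card = d + min (min j.val (n - j.val)) d := by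
  have hdn : d ≤ n := by omega
  have hjn : j.val < n := j.isLt
  rcases le_or_gt (j.val + d) n with h | h
  · rw [card_union_zero_of_le hdn h]
    congr 1
    omega
  · -- use reflection j ↦ -j
    have hj0 : j.val ≠ 0 := by omega
    have hneg : (-j).val = n - j.val := by
      have hm : (n - j.val) % n = n - j.val := Nat.mod_eq_of_lt (by omega)
      rw [Fin.neg_def]
      exact hm
    have hsym : (runSet d n 0 ∪ runSet d n j).card
        = (runSet d n 0 ∪ runSet d n (-j)).card := by
      have h1 : runSet d n j = (runSet d n 0).image (fun x => j + x) := by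
        simpa using runSet_eq_image (n := n) (d := d) j 0
      have h2 : runSet d n 0 = (runSet d n (-j)).image (fun x => j + x) := by
        have := runSet_eq_image (n := n) (d := d) j (-j)
        rwa [add_neg_cancel] at this
      rw [h1, h2, ← Finset.image_union, Finset.card_image_of_injective _ (add_right_injective j),
        Finset.union_comm]
    rw [hsym, card_union_zero_of_le hdn (by rw [hneg]; omega), hneg]
    omega

lemma geo2 (p : ℝ) (d : ℕ) :
    (1 - p) * ∑ k ∈ Finset.range d, (1 + 2 * (k : ℝ)) * p ^ k
      = 2 * (∑ k ∈ Finset.range d, p ^ k) - 1 - (2 * (d : ℝ) - 1) * p ^ d := by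
  induction d with
  | zero => simp
  | succ d ih =>
    rw [Finset.sum_range_succ, Finset.sum_range_succ, mul_add, ih]
    push_cast
    ring

lemma claim2 (p : ℝ) (d : ℕ) (hd : 1 ≤ d) :
    (∑ k ∈ Finset.range d, (p ^ (d + k) - p ^ (2 * d)))
      + ∑ k ∈ Finset.Ico 1 d, (p ^ (d + k) - p ^ (2 * d))
      = p ^ d * (1 - p) * ∑ k ∈ Finset.range d, (1 + 2 * (k : ℝ)) * p ^ k := by
  have hIco : ∑ k ∈ Finset.Ico 1 d, (p ^ (d + k) - p ^ (2 * d))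
      = (∑ k ∈ Finset.range d, (p ^ (d + k) - p ^ (2 * d))) - (p ^ d - p ^ (2*d)) := by
    have h := Finset.sum_Ico_consecutive (fun k => p ^ (d + k) - p ^ (2 * d))
      (Nat.zero_le 1) hd
    rw [← Finset.range_eq_Ico] at h
    have h01 : ∑ k ∈ Finset.Ico 0 1, (p ^ (d + k) - p ^ (2 * d)) = p ^ d - p ^ (2*d) := by
      simp
    simp only [Finset.range_one, Finset.sum_singleton, add_zero] at h
    simp only [h01] at *
    rw [← Finset.range_eq_Ico] at h
    linarith [h]
  rw [hIco]
  have hsum : ∑ k ∈ Finset.range d, (p ^ (d + k) - p ^ (2 * d))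
      = p ^ d * (∑ k ∈ Finset.range d, p ^ k) - (d : ℝ) * p ^ (2 * d) := by
    rw [Finset.sum_sub_distrib, Finset.sum_const, Finset.card_range]
    simp_rw [pow_add]
    rw [← Finset.mul_sum]
    ring
  rw [hsum, mul_assoc, geo2]
  have : p ^ (2 * d) = p ^ d * p ^ d := by rw [two_mul, pow_add]
  rw [this]
  ring

lemma claim1 (p : ℝ) (n d : ℕ) (hd : 1 ≤ d) (hn : 2 * d ≤ n) :
    ∑ t ∈ Finset.range n, (p ^ (d + min (min t (n - t)) d) - p ^ (2 * d))
      = (∑ k ∈ Finset.range d, (p ^ (d + k) - p ^ (2 * d)))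
        + ∑ k ∈ Finset.Ico 1 d, (p ^ (d + k) - p ^ (2 * d)) := by
  have hsplit := Finset.sum_Ico_consecutive
    (fun t => p ^ (d + min (min t (n - t)) d) - p ^ (2 * d)) (Nat.zero_le d) (by omega : d ≤ n)
  rw [Finset.range_eq_Ico, ← hsplit, ← Finset.range_eq_Ico]
  congr 1
  · refine Finset.sum_congr rfl fun t ht => ?_
    have ht' := Finset.mem_range.1 ht
    simp only [min_eq_left (by omega : t ≤ n - t), min_eq_left (by omega : t ≤ d)]
  · -- reflection t ↦ n - t
    have hbij : ∑ t ∈ Finset.Ico d n, (p ^ (d + min (min t (n - t)) d) - p ^ (2 * d))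
        = ∑ k ∈ Finset.Ico 1 (n - d + 1), (p ^ (d + min k d) - p ^ (2 * d)) := by
      refine Finset.sum_nbij' (fun t => n - t) (fun k => n - k) ?_ ?_ ?_ ?_ ?_ <;>
        intro a ha <;> simp only [Finset.mem_Ico] at * <;> try omega
      have h1 : min (min a (n - a)) d = min (n - a) d := by
        rcases le_total a (n - a) with h | h
        · rw [min_eq_left h, min_eq_right (by omega : d ≤ a), min_eq_right (le_trans (by omega) h)]
        · rw [min_eq_right h]
      rw [h1]
    rw [hbij]
    have hsplit2 := Finset.sum_Ico_consecutive
      (fun k => p ^ (d + min k d) - p ^ (2 * d)) (by omega : 1 ≤ d) (by omega : d ≤ n - d + 1)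
    rw [← hsplit2]
    have hzero : ∑ k ∈ Finset.Ico d (n - d + 1), (p ^ (d + min k d) - p ^ (2 * d)) = 0 := by
      refine Finset.sum_eq_zero fun k hk => ?_
      have hk' := (Finset.mem_Ico.1 hk).1
      rw [min_eq_right (by omega : d ≤ k), ← two_mul, sub_self]
    rw [hzero, add_zero]
    refine Finset.sum_congr rfl fun k hk => ?_
    have hk' := Finset.mem_Ico.1 hk
    simp only [min_eq_left (by omega : k ≤ d)]

open MeasureTheory ProbabilityTheory

lemma bern_prob (p : ℝ) (hp0 : 0 < p) (hp1 : p < 1) :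
    IsProbabilityMeasure (ENNReal.ofReal p • Measure.dirac (1:ℝ) + ENNReal.ofReal (1-p) • Measure.dirac 0) := by
  constructor
  simp [Measure.add_apply, Measure.smul_apply, Measure.dirac_apply, ← ENNReal.ofReal_add,
    hp0.le, (by linarith : (0:ℝ) ≤ 1 - p)]

/-- For i.i.d. Bernoulli(p) variables `ξ₁, …, ξₙ` with cyclic convention, the
centered number of d-runs `V_d = ∑_{m=1}^n (ξ_m ⋯ ξ_{m+d-1} - p^d)` satisfies
`E[V_d²] = n p^d (1-p) ∑_{k=0}^{d-1} (1 + 2k) p^k`. -/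
theorem runs_second_moment
    (n d : ℕ) [NeZero n] (hd : 1 ≤ d) (hn : 2 * d ≤ n)
    (p : ℝ) (hp0 : 0 < p) (hp1 : p < 1) :
    ∫ ω : Fin n → ℝ,
        (∑ m : Fin n, ((∏ l ∈ Finset.range d, ω (m + (l : Fin n))) - p ^ d)) ^ 2
      ∂(Measure.pi fun _ : Fin n =>
          ENNReal.ofReal p • Measure.dirac (1 : ℝ) + ENNReal.ofReal (1 - p) • Measure.dirac 0)
    = n * p ^ d * (1 - p) * ∑ k ∈ Finset.range d, (1 + 2 * (k : ℝ)) * p ^ k := by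
  have hdn : d ≤ n := by omega
  set μ : Measure ℝ := ENNReal.ofReal p • Measure.dirac 1 + ENNReal.ofReal (1-p) • Measure.dirac 0 with hμ
  haveI : IsProbabilityMeasure μ := bern_prob p hp0 hp1
  set π : Measure (Fin n → ℝ) := Measure.pi fun _ : Fin n => μ with hπ
  haveI : IsProbabilityMeasure π := by rw [hπ]; infer_instance
  -- the per-pair term
  set term : Fin n → Fin n → (Fin n → ℝ) → ℝ := fun m m' ω =>
    ((∏ i ∈ runSet d n m, ω i) * (∏ i ∈ runSet d n m', ω i))
      - p ^ d * ((∏ i ∈ runSet d n m, ω i) * ∏ i ∈ (∅ : Finset (Fin n)), ω i)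
      - p ^ d * ((∏ i ∈ runSet d n m', ω i) * ∏ i ∈ (∅ : Finset (Fin n)), ω i)
      + p ^ d * p ^ d with hterm
  have hint : ∀ m m' : Fin n, Integrable (term m m') π := by
    intro m m'
    exact (((pair_integrable p _ _).sub ((pair_integrable p _ _).const_mul _)).sub
      ((pair_integrable p _ _).const_mul _)).add (integrable_const _)
  have hval : ∀ m m' : Fin n, ∫ ω, term m m' ω ∂π
      = p ^ ((runSet d n m ∪ runSet d n m').card) - p ^ (2 * d) := by
    intro m m'
    rw [hterm]
    simp only []
    have iA : Integrable (fun ω : Fin n → ℝ =>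
        (∏ i ∈ runSet d n m, ω i) * ∏ i ∈ runSet d n m', ω i) π := pair_integrable p _ _
    have iB : Integrable (fun ω : Fin n → ℝ =>
        p ^ d * ((∏ i ∈ runSet d n m, ω i) * ∏ i ∈ (∅ : Finset (Fin n)), ω i)) π :=
      (pair_integrable p _ _).const_mul _
    have iC : Integrable (fun ω : Fin n → ℝ =>
        p ^ d * ((∏ i ∈ runSet d n m', ω i) * ∏ i ∈ (∅ : Finset (Fin n)), ω i)) π :=
      (pair_integrable p _ _).const_mul _
    have iAB : Integrable (fun ω : Fin n → ℝ =>
        (∏ i ∈ runSet d n m, ω i) * ∏ i ∈ runSet d n m', ω i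
          - p ^ d * ((∏ i ∈ runSet d n m, ω i) * ∏ i ∈ (∅ : Finset (Fin n)), ω i)) π := iA.sub iB
    have iABC : Integrable (fun ω : Fin n → ℝ =>
        (∏ i ∈ runSet d n m, ω i) * ∏ i ∈ runSet d n m', ω i
          - p ^ d * ((∏ i ∈ runSet d n m, ω i) * ∏ i ∈ (∅ : Finset (Fin n)), ω i)
          - p ^ d * ((∏ i ∈ runSet d n m', ω i) * ∏ i ∈ (∅ : Finset (Fin n)), ω i)) π := iAB.sub iC
    rw [integral_add iABC (integrable_const _), integral_sub iAB iC, integral_sub iA iB,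
      integral_const_mul, integral_const_mul, integral_const,
      pair_moment p hp0.le hp1.le, pair_moment p hp0.le hp1.le, pair_moment p hp0.le hp1.le,
      Finset.union_empty, Finset.union_empty, card_runSet hdn, card_runSet hdn]
    simp only [measure_univ, probReal_univ, ENNReal.toReal_one, smul_eq_mul, one_mul]
    rw [two_mul, pow_add]
    ring
  -- rewrite the integrand
  have hrw : ∀ ω : Fin n → ℝ,
      (∑ m : Fin n, ((∏ l ∈ Finset.range d, ω (m + (l : Fin n))) - p ^ d)) ^ 2
        = ∑ m : Fin n, ∑ m' : Fin n, term m m' ω := by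
    intro ω
    rw [pow_two, Finset.sum_mul_sum]
    refine Finset.sum_congr rfl fun m _ => Finset.sum_congr rfl fun m' _ => ?_
    rw [prod_runSet hdn m, prod_runSet hdn m', hterm]
    simp only [Finset.prod_empty, mul_one]
    ring
  calc ∫ ω, (∑ m : Fin n, ((∏ l ∈ Finset.range d, ω (m + (l : Fin n))) - p ^ d)) ^ 2 ∂π
      = ∫ ω, ∑ m : Fin n, ∑ m' : Fin n, term m m' ω ∂π := by
        exact integral_congr_ae (Filter.Eventually.of_forall hrw)
    _ = ∑ m : Fin n, ∑ m' : Fin n, ∫ ω, term m m' ω ∂π := by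
        rw [integral_finset_sum _ fun m _ => integrable_finset_sum _ fun m' _ => hint m m']
        exact Finset.sum_congr rfl fun m _ => integral_finset_sum _ fun m' _ => hint m m'
    _ = ∑ m : Fin n, ∑ j : Fin n,
          (p ^ ((runSet d n 0 ∪ runSet d n j).card) - p ^ (2 * d)) := by
        refine Finset.sum_congr rfl fun m _ => ?_
        rw [← Equiv.sum_comp (Equiv.subRight m)
          (fun j => p ^ ((runSet d n 0 ∪ runSet d n j).card) - p ^ (2 * d))]
        refine Finset.sum_congr rfl fun m' _ => ?_
        rw [hval m m', card_union_shift m m']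
        simp [Equiv.subRight_apply]
    _ = ∑ m : Fin n, ∑ t ∈ Finset.range n,
          (p ^ (d + min (min t (n - t)) d) - p ^ (2 * d)) := by
        refine Finset.sum_congr rfl fun m _ => ?_
        rw [← Fin.sum_univ_eq_sum_range (fun t => p ^ (d + min (min t (n - t)) d) - p ^ (2 * d)) n]
        exact Finset.sum_congr rfl fun j _ => by rw [card_union_zero hd hn j]
    _ = n * p ^ d * (1 - p) * ∑ k ∈ Finset.range d, (1 + 2 * (k : ℝ)) * p ^ k := by
        rw [Finset.sum_const, Finset.card_univ, Fintype.card_fin, nsmul_eq_mul,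
          claim1 p n d hd hn, claim2 p d hd]
        ring
end

section
/- With the notation of the cyclic runs setup, defining W_i := V_i / √(n p^i (1-p)), the covariance E[W_i W_j] = p^{|i-j|/2} Σ_{k=0}^{min(i,j)-1} (|i-j| + 1 + 2k) p^k, which is independent of n. -/
set_option linter.all false
set_option maxHeartbeats 1000000

open MeasureTheory ProbabilityTheory Fin.NatCast
open MeasureTheory Finset

variable {n : ℕ} [NeZero n] {p : ℝ}


noncomputable def muB (p : ℝ) : Measure ℝ :=
  ENNReal.ofReal p • Measure.dirac (1 : ℝ) + ENNReal.ofReal (1 - p) • Measure.dirac 0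

noncomputable def chi (S : Finset (Fin n)) : Fin n → ℝ := fun t => if t ∈ S then 1 else 0

lemma muB_apply {s : Set ℝ} (hs : MeasurableSet s) :
    muB p s = ENNReal.ofReal p * s.indicator 1 1 + ENNReal.ofReal (1 - p) * s.indicator 1 0 := by
  simp [muB, Measure.dirac_apply' _ hs]

lemma indicator_pi (s : Fin n → Set ℝ) (x : Fin n → ℝ) :
    (Set.pi Set.univ s).indicator (1 : (Fin n → ℝ) → ENNReal) x
      = ∏ t, (s t).indicator 1 (x t) := by
  by_cases h : x ∈ Set.pi Set.univ s
  · simp only [Set.indicator_of_mem h, Pi.one_apply]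
    refine (Finset.prod_eq_one fun t _ => ?_).symm
    rw [Set.indicator_of_mem (h t (Set.mem_univ t))]
    rfl
  · rw [Set.indicator_of_notMem h, eq_comm]
    rw [Set.mem_univ_pi] at h
    push_neg at h
    obtain ⟨t, ht⟩ := h
    exact Finset.prod_eq_zero (mem_univ t) (by rw [Set.indicator_of_notMem ht])

lemma pi_muB_eq (hp0 : 0 ≤ p) (hp1 : p ≤ 1) :
    (Measure.pi fun _ : Fin n => muB p) =
      ∑ S : Finset (Fin n),
        ((ENNReal.ofReal p) ^ S.card * (ENNReal.ofReal (1 - p)) ^ (n - S.card)) •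
          Measure.dirac (chi S) := by
  haveI : IsProbabilityMeasure (muB p) := by
    constructor
    rw [muB_apply MeasurableSet.univ]
    simp [← ENNReal.ofReal_add hp0 (by linarith : (0:ℝ) ≤ 1 - p)]
  refine Measure.pi_eq fun s hs => ?_
  rw [Measure.finset_sum_apply]
  have key : ∀ S : Finset (Fin n),
      (((ENNReal.ofReal p) ^ S.card * (ENNReal.ofReal (1 - p)) ^ (n - S.card)) •
        Measure.dirac (chi S)) (Set.pi Set.univ s)
      = (∏ t ∈ S, (ENNReal.ofReal p * (s t).indicator 1 1)) *
        ∏ t ∈ univ \ S, (ENNReal.ofReal (1 - p) * (s t).indicator 1 0) := by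
    intro S
    rw [Measure.smul_apply, Measure.dirac_apply, smul_eq_mul, indicator_pi,
      Finset.prod_mul_distrib, Finset.prod_mul_distrib, prod_const, prod_const,
      card_sdiff_of_subset (subset_univ S), card_univ, Fintype.card_fin,
      ← Finset.prod_sdiff (subset_univ S)]
    have h1 : ∀ t ∈ S, (s t).indicator (1 : ℝ → ENNReal) (chi S t)
        = (s t).indicator 1 (1:ℝ) := by
      intro t ht; simp [chi, ht]
    have h0 : ∀ t ∈ univ \ S, (s t).indicator (1 : ℝ → ENNReal) (chi S t)
        = (s t).indicator 1 (0:ℝ) := by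
      intro t ht; simp only [mem_sdiff] at ht; simp [chi, ht.2]
    rw [Finset.prod_congr rfl h1, Finset.prod_congr rfl h0]
    ring
  rw [Finset.sum_congr rfl fun S _ => key S]
  rw [← Finset.powerset_univ,
    ← Finset.prod_add (fun t => ENNReal.ofReal p * (s t).indicator 1 1)
      (fun t => ENNReal.ofReal (1 - p) * (s t).indicator 1 0) univ]
  exact Finset.prod_congr rfl fun t _ => (muB_apply (hs t)).symm



lemma integrable_dirac'_s11 {α E : Type*} [MeasurableSpace α] [MeasurableSingletonClass α]
    [NormedAddCommGroup E] (f : α → E) (a : α) : Integrable f (Measure.dirac a) := by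
  have h : f =ᵐ[Measure.dirac a] fun _ => f a := by
    rw [Filter.EventuallyEq, ae_iff]
    rw [Measure.dirac_apply]
    simp
  exact (integrable_const (f a)).congr h.symm

lemma integral_sum_dirac (hp0 : 0 ≤ p) (hp1 : p ≤ 1)
    (w : Finset (Fin n) → ENNReal) (hw : ∀ S, w S ≠ ⊤) (f : (Fin n → ℝ) → ℝ) :
    ∫ ω, f ω ∂(∑ S : Finset (Fin n), w S • Measure.dirac (chi S))
      = ∑ S : Finset (Fin n), (w S).toReal * f (chi S) := by
  rw [integral_finset_sum_measure (fun S _ => (integrable_dirac'_s11 f (chi S)).smul_measure (hw S))]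
  refine Finset.sum_congr rfl fun S _ => ?_
  rw [integral_smul_measure, integral_dirac, smul_eq_mul]

lemma sum_weight_subset (U : Finset (Fin n)) :
    ∑ S : Finset (Fin n), p ^ S.card * (1 - p) ^ (n - S.card) * (if U ⊆ S then 1 else 0)
      = p ^ U.card := by
  have key : ∀ S : Finset (Fin n),
      p ^ S.card * (1 - p) ^ (n - S.card) * (if U ⊆ S then 1 else 0)
        = (∏ t ∈ S, p) * ∏ t ∈ univ \ S, ((1 - p) * (if t ∈ U then 0 else 1)) := by
    intro S
    rw [Finset.prod_mul_distrib, prod_const, prod_const,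
      card_sdiff_of_subset (subset_univ S), card_univ, Fintype.card_fin]
    have : (∏ t ∈ univ \ S, (if t ∈ U then (0:ℝ) else 1)) = if U ⊆ S then 1 else 0 := by
      by_cases h : U ⊆ S
      · rw [if_pos h]
        refine Finset.prod_eq_one fun t ht => ?_
        rw [mem_sdiff] at ht
        rw [if_neg (fun hc => ht.2 (h hc))]
      · rw [if_neg h]
        rw [Finset.not_subset] at h
        obtain ⟨t, htU, htS⟩ := h
        exact Finset.prod_eq_zero (by simp [htS]) (if_pos htU)
    rw [this]
    ring
  rw [Finset.sum_congr rfl fun S _ => key S, ← Finset.powerset_univ,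
    ← Finset.prod_add (fun _ => p) (fun t => (1 - p) * (if t ∈ U then 0 else 1)) univ]
  have : ∀ t : Fin n, p + (1 - p) * (if t ∈ U then (0:ℝ) else 1) = if t ∈ U then p else 1 := by
    intro t; by_cases h : t ∈ U <;> simp [h]
  rw [Finset.prod_congr rfl fun t _ => this t, Finset.prod_ite_mem, Finset.univ_inter,
    Finset.prod_const]
open Finset

lemma G2 (p : ℝ) (m : ℕ) :
    (1 - p) * ∑ t ∈ range m, (t : ℝ) * p ^ t
      = (∑ t ∈ range m, p ^ t) - 1 - ((m : ℝ) - 1) * p ^ m := by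
  induction m with
  | zero => simp
  | succ m ih =>
    rw [sum_range_succ, sum_range_succ]
    push_cast
    push_cast at ih
    linear_combination ih

lemma alg_main (p c : ℝ) (i : ℕ) (h1 : 1 ≤ i) :
    2 * ((∑ k ∈ range (i - 1), p ^ (k + 1)) - ((i : ℝ) - 1) * p ^ i) + (c + 1) * (1 - p ^ i)
      = (1 - p) * ∑ t ∈ range i, ((c + 1 + 2 * (t : ℝ)) * p ^ t) := by
  have hA := geom_sum_mul p i
  have hB := G2 p i
  have hshift : (∑ t ∈ range i, p ^ t) = (∑ k ∈ range (i - 1), p ^ (k + 1)) + 1 := by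
    obtain ⟨m, rfl⟩ := Nat.exists_eq_add_of_le h1
    rw [Nat.add_comm 1 m, Finset.sum_range_succ']
    simp
  have hexp : ∑ t ∈ range i, ((c + 1 + 2 * (t : ℝ)) * p ^ t)
      = (c + 1) * (∑ t ∈ range i, p ^ t) + 2 * ∑ t ∈ range i, (t : ℝ) * p ^ t := by
    rw [Finset.mul_sum, Finset.mul_sum, ← Finset.sum_add_distrib]
    exact Finset.sum_congr rfl fun t _ => by ring
  rw [hexp]
  linear_combination (c + 1) * hA - 2 * hB - 2 * hshift

def arc (m : Fin n) (i : ℕ) : Finset (Fin n) :=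
  (Finset.range i).image (fun l : ℕ => m + (l : Fin n))

lemma natCast_val {l : ℕ} (hl : l < n) : ((l : Fin n)).val = l := by
  rw [Fin.val_natCast]; exact Nat.mod_eq_of_lt hl

lemma arc_prod (ω : Fin n → ℝ) (m : Fin n) {i : ℕ} (hi : i ≤ n) :
    ∏ t ∈ arc m i, ω t = ∏ l ∈ Finset.range i, ω (m + (l : Fin n)) := by
  refine Finset.prod_image fun l1 h1 l2 h2 he => ?_
  rw [coe_range, Set.mem_Iio] at h1 h2
  have := add_left_cancel he
  have h1' := natCast_val (lt_of_lt_of_le h1 hi)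
  have h2' := natCast_val (lt_of_lt_of_le h2 hi)
  rw [← h1', ← h2', this]

lemma arc_card (m : Fin n) {i : ℕ} (hi : i ≤ n) : (arc m i).card = i := by
  rw [arc, Finset.card_image_of_injOn, card_range]
  intro l1 h1 l2 h2 he
  rw [coe_range, Set.mem_Iio] at h1 h2
  have := add_left_cancel he
  have h1' := natCast_val (lt_of_lt_of_le h1 hi)
  have h2' := natCast_val (lt_of_lt_of_le h2 hi)
  rw [← h1', ← h2', this]

lemma arc_add (m s : Fin n) (i : ℕ) :
    arc (m + s) i = (arc s i).image (fun x => m + x) := by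
  rw [arc, arc, Finset.image_image]
  exact Finset.image_congr fun l _ => by simp [Function.comp, add_assoc]

lemma mem_arc {i : ℕ} (hi : i ≤ n) (s x : Fin n) : x ∈ arc s i ↔ (x - s).val < i := by
  constructor
  · intro hx
    obtain ⟨l, hl, rfl⟩ := Finset.mem_image.1 hx
    rw [mem_range] at hl
    rw [add_sub_cancel_left, natCast_val (lt_of_lt_of_le hl hi)]
    exact hl
  · intro hx
    refine Finset.mem_image.2 ⟨(x - s).val, mem_range.2 hx, ?_⟩
    rw [Fin.cast_val_eq_self, add_sub_cancel]

lemma inter_card {i j : ℕ} (hi : i ≤ n) (hj : j ≤ n) (s : Fin n) :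
    (arc 0 i ∩ arc s j).card
      = ((Finset.range i).filter (fun l : ℕ => (((l : Fin n)) - s).val < j)).card := by
  refine Finset.card_bij (fun x _ => x.val) ?_ ?_ ?_
  · intro x hx
    rw [Finset.mem_inter, mem_arc hi, mem_arc hj, sub_zero] at hx
    rw [mem_filter, mem_range, Fin.cast_val_eq_self]
    exact hx
  · intro x1 h1 x2 h2 he
    exact Fin.val_injective he
  · intro l hl
    rw [mem_filter, mem_range] at hl
    refine ⟨(l : Fin n), ?_, natCast_val (lt_of_lt_of_le hl.1 hi)⟩
    rw [Finset.mem_inter, mem_arc hi, mem_arc hj, sub_zero,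
      natCast_val (lt_of_lt_of_le hl.1 hi)]
    exact hl

lemma val_sub_cast {l : ℕ} (hl : l < n) (s : Fin n) :
    (((l : Fin n)) - s).val = if s.val ≤ l then l - s.val else n - s.val + l := by
  rw [Fin.sub_def]
  simp only []
  rw [natCast_val hl]
  have hs : s.val < n := s.isLt
  split_ifs with h
  · have h1 : n - s.val + l = n + (l - s.val) := by omega
    rw [h1, Nat.add_mod_left]
    exact Nat.mod_eq_of_lt (by omega)
  · exact Nat.mod_eq_of_lt (by omega)

lemma filter_card_eval {i j : ℕ} (hi : 1 ≤ i) (hij : i ≤ j) (hn : i + j ≤ n) (s : Fin n) :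
    ((Finset.range i).filter (fun l : ℕ => (((l : Fin n)) - s).val < j)).card
      = if s.val < i then i - s.val
        else if s.val ≤ n - j then 0
        else min i (s.val + j - n) := by
  have hs : s.val < n := s.isLt
  have key : ∀ l, l < i → ((((l : Fin n)) - s).val < j ↔
      (if s.val < i then s.val ≤ l
       else if s.val ≤ n - j then False
       else l < s.val + j - n)) := by
    intro l hl
    rw [val_sub_cast (by omega) s]
    split_ifs with h1 h2 h3 h4 h5 <;> first | omega | (simp only [iff_false]; omega)
  rw [Finset.filter_congr (fun l hl => by rw [key l (mem_range.1 hl)])]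
  split_ifs with h1 h2
  · have : (Finset.range i).filter (fun l => s.val ≤ l) = Finset.Ico s.val i := by
      ext l; simp only [mem_filter, mem_range, mem_Ico]; omega
    rw [this, Nat.card_Ico]
  · simp
  · have : (Finset.range i).filter (fun l => l < s.val + j - n)
        = Finset.range (min i (s.val + j - n)) := by
      ext l; simp only [mem_filter, mem_range, Nat.lt_min]
    rw [this, card_range]

lemma inter_card_eval {i j : ℕ} (hi : 1 ≤ i) (hij : i ≤ j) (hn : i + j ≤ n) (s : Fin n) :
    (arc 0 i ∩ arc s j).card
      = if s.val < i then i - s.val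
        else if s.val ≤ n - j then 0
        else min i (s.val + j - n) := by
  rw [inter_card (by omega) (by omega) s, filter_card_eval hi hij hn s]

lemma sum_G {i j : ℕ} (hi : 1 ≤ i) (hij : i ≤ j) (hn : i + j ≤ n) (G : ℕ → ℝ)
    (hG0 : G 0 = 0) :
    ∑ s : Fin n, G ((arc 0 i ∩ arc s j).card)
      = 2 * (∑ k ∈ Finset.range (i - 1), G (k + 1)) + (((j - i : ℕ) : ℝ) + 1) * G i := by
  have hjn : j ≤ n := by omega
  have hin : i ≤ n - j := by omega
  have step1 : ∑ s : Fin n, G ((arc 0 i ∩ arc s j).card)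
      = ∑ σ ∈ Finset.range n, G (if σ < i then i - σ
          else if σ ≤ n - j then 0 else min i (σ + j - n)) := by
    rw [← Fin.sum_univ_eq_sum_range
      (fun σ => G (if σ < i then i - σ else if σ ≤ n - j then 0 else min i (σ + j - n))) n]
    refine Finset.sum_congr rfl fun s _ => ?_
    rw [inter_card_eval hi hij hn s]
  rw [step1, Finset.range_eq_Ico,
    ← Finset.sum_Ico_consecutive _ (Nat.zero_le (n - j + 1)) (by omega : n - j + 1 ≤ n),
    ← Finset.sum_Ico_consecutive _ (Nat.zero_le i) (by omega : i ≤ n - j + 1)]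
  have S2 : ∑ σ ∈ Finset.Ico i (n - j + 1),
      G (if σ < i then i - σ else if σ ≤ n - j then 0 else min i (σ + j - n)) = 0 := by
    refine Finset.sum_eq_zero fun σ hσ => ?_
    rw [Finset.mem_Ico] at hσ
    rw [if_neg (by omega), if_pos (by omega), hG0]
  have S1 : ∑ σ ∈ Finset.Ico 0 i,
      G (if σ < i then i - σ else if σ ≤ n - j then 0 else min i (σ + j - n))
      = (∑ k ∈ Finset.range (i - 1), G (k + 1)) + G i := by
    rw [← Finset.range_eq_Ico]
    have : ∀ σ ∈ Finset.range i,
        G (if σ < i then i - σ else if σ ≤ n - j then 0 else min i (σ + j - n))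
          = G (i - 1 - σ + 1) := by
      intro σ hσ
      rw [mem_range] at hσ
      rw [if_pos hσ]
      congr 1
      omega
    rw [Finset.sum_congr rfl this, Finset.sum_range_reflect (fun k => G (k + 1)) i]
    have hi' : i = (i - 1) + 1 := by omega
    rw [hi', Finset.sum_range_succ]
    simp
  have S3 : ∑ σ ∈ Finset.Ico (n - j + 1) n,
      G (if σ < i then i - σ else if σ ≤ n - j then 0 else min i (σ + j - n))
      = (∑ k ∈ Finset.range (i - 1), G (k + 1)) + ((j - i : ℕ) : ℝ) * G i := by
    rw [Finset.sum_Ico_eq_sum_range]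
    have hcard : n - (n - j + 1) = j - 1 := by omega
    rw [hcard]
    have : ∀ k ∈ Finset.range (j - 1),
        G (if n - j + 1 + k < i then i - (n - j + 1 + k)
           else if n - j + 1 + k ≤ n - j then 0 else min i (n - j + 1 + k + j - n))
          = G (min i (k + 1)) := by
      intro k hk
      rw [mem_range] at hk
      rw [if_neg (by omega), if_neg (by omega)]
      congr 1
      omega
    rw [Finset.sum_congr rfl this, Finset.range_eq_Ico,
      ← Finset.sum_Ico_consecutive _ (Nat.zero_le (i - 1)) (by omega : i - 1 ≤ j - 1),
      ← Finset.range_eq_Ico]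
    have e1 : ∀ k ∈ Finset.range (i - 1), G (min i (k + 1)) = G (k + 1) := by
      intro k hk; rw [mem_range] at hk; rw [min_eq_right (by omega)]
    have e2 : ∀ k ∈ Finset.Ico (i - 1) (j - 1), G (min i (k + 1)) = G i := by
      intro k hk; rw [Finset.mem_Ico] at hk; rw [min_eq_left (by omega)]
    rw [Finset.sum_congr rfl e1, Finset.sum_congr rfl e2, Finset.sum_const, Nat.card_Ico,
      nsmul_eq_mul]
    congr 3
    omega
  rw [S1, S2, S3, Finset.range_eq_Ico]
  ring

lemma chi_prod_arc {i : ℕ} (hi : i ≤ n) (S : Finset (Fin n)) (m : Fin n) :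
    ∏ l ∈ Finset.range i, chi S (m + (l : Fin n))
      = if arc m i ⊆ S then (1 : ℝ) else 0 := by
  rw [← arc_prod (chi S) m hi]
  by_cases h : arc m i ⊆ S
  · rw [if_pos h]
    exact Finset.prod_eq_one fun t ht => by simp [chi, h ht]
  · rw [if_neg h]
    rw [Finset.not_subset] at h
    obtain ⟨t, ht, htS⟩ := h
    exact Finset.prod_eq_zero ht (by simp [chi, htS])

lemma ite_one_zero_mul {P Q : Prop} [Decidable P] [Decidable Q] :
    (if P then (1:ℝ) else 0) * (if Q then (1:ℝ) else 0) = if P ∧ Q then (1:ℝ) else 0 := by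
  by_cases hP : P <;> by_cases hQ : Q <;> simp [hP, hQ]

lemma inner_sum_eval {i j : ℕ} (hi : i ≤ n) (hj : j ≤ n) (hp0 : 0 < p) (hp1 : p < 1)
    (m m' : Fin n) :
    ∑ S : Finset (Fin n), p ^ S.card * (1 - p) ^ (n - S.card) *
        (((if arc m i ⊆ S then (1:ℝ) else 0) - p ^ i) *
         ((if arc m' j ⊆ S then (1:ℝ) else 0) - p ^ j))
      = p ^ (arc m i ∪ arc m' j).card - p ^ (i + j) := by
  have expand : ∀ S : Finset (Fin n),
      p ^ S.card * (1 - p) ^ (n - S.card) *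
        (((if arc m i ⊆ S then (1:ℝ) else 0) - p ^ i) *
         ((if arc m' j ⊆ S then (1:ℝ) else 0) - p ^ j))
      = p ^ S.card * (1 - p) ^ (n - S.card) * (if arc m i ∪ arc m' j ⊆ S then (1:ℝ) else 0)
        - p ^ j * (p ^ S.card * (1 - p) ^ (n - S.card) * (if arc m i ⊆ S then (1:ℝ) else 0))
        - p ^ i * (p ^ S.card * (1 - p) ^ (n - S.card) * (if arc m' j ⊆ S then (1:ℝ) else 0))
        + (p ^ i * p ^ j) * (p ^ S.card * (1 - p) ^ (n - S.card) * (if (∅ : Finset (Fin n)) ⊆ S then (1:ℝ) else 0)) := by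
    intro S
    rw [show (if arc m i ∪ arc m' j ⊆ S then (1:ℝ) else 0)
        = (if arc m i ⊆ S then (1:ℝ) else 0) * (if arc m' j ⊆ S then (1:ℝ) else 0) by
      rw [ite_one_zero_mul]; simp [Finset.union_subset_iff]]
    simp only [Finset.empty_subset, if_pos]
    ring
  rw [Finset.sum_congr rfl fun S _ => expand S]
  rw [Finset.sum_add_distrib, Finset.sum_sub_distrib, Finset.sum_sub_distrib,
    ← Finset.mul_sum, ← Finset.mul_sum, ← Finset.mul_sum,
    sum_weight_subset, sum_weight_subset, sum_weight_subset, sum_weight_subset,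
    arc_card m hi, arc_card m' hj, Finset.card_empty, pow_zero, ← pow_add]
  ring

lemma double_sum_shift {i j : ℕ} (f : ℕ → ℝ) :
    ∑ m : Fin n, ∑ m' : Fin n, f ((arc m i ∪ arc m' j).card)
      = n * ∑ s : Fin n, f ((arc 0 i ∪ arc s j).card) := by
  have hcard : ∀ (m s : Fin n), (arc m i ∪ arc (m + s) j).card = (arc 0 i ∪ arc s j).card := by
    intro m s
    have h1 : arc m i = (arc 0 i).image (fun x => m + x) := by
      have := arc_add m 0 i
      rwa [add_zero] at this
    rw [h1, arc_add m s j, ← Finset.image_union,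
      Finset.card_image_of_injective _ (add_right_injective m)]
  have hinner : ∀ m : Fin n, ∑ m' : Fin n, f ((arc m i ∪ arc m' j).card)
      = ∑ s : Fin n, f ((arc 0 i ∪ arc s j).card) := by
    intro m
    rw [← Equiv.sum_comp (Equiv.addLeft m) (fun m' => f ((arc m i ∪ arc m' j).card))]
    refine Finset.sum_congr rfl fun s _ => ?_
    simp only [Equiv.coe_addLeft]
    rw [hcard m s]
  rw [Finset.sum_congr rfl fun m _ => hinner m, Finset.sum_const, card_univ,
    Fintype.card_fin, nsmul_eq_mul]

lemma total_sum {i j : ℕ} (hi : 1 ≤ i) (hij : i ≤ j) (hn : i + j ≤ n) :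
    ∑ s : Fin n, (p ^ ((arc 0 i ∪ arc s j).card) - p ^ (i + j))
      = p ^ j * ((1 - p) *
          ∑ t ∈ Finset.range i, (((j : ℝ) - (i : ℝ) + 1 + 2 * (t : ℝ)) * p ^ t)) := by
  set G : ℕ → ℝ := fun k => p ^ (i + j - k) - p ^ (i + j) with hG
  have hterm : ∀ s : Fin n, p ^ ((arc 0 i ∪ arc s j).card) - p ^ (i + j)
      = G ((arc 0 i ∩ arc s j).card) := by
    intro s
    have h1 := Finset.card_union_add_card_inter (arc 0 i) (arc s j)
    rw [arc_card 0 (by omega), arc_card s (by omega)] at h1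
    have h2 : (arc 0 i ∪ arc s j).card = i + j - (arc 0 i ∩ arc s j).card := by omega
    rw [h2, hG]
  rw [Finset.sum_congr rfl fun s _ => hterm s,
    sum_G hi hij hn G (by simp [hG])]
  have hA : ∑ k ∈ Finset.range (i - 1), G (k + 1)
      = p ^ j * ((∑ k ∈ Finset.range (i - 1), p ^ (k + 1)) - ((i : ℝ) - 1) * p ^ i) := by
    have hrefl : ∑ k ∈ Finset.range (i - 1), p ^ (i + j - (k + 1))
        = ∑ k ∈ Finset.range (i - 1), p ^ (j + 1 + k) := by
      rw [← Finset.sum_range_reflect (fun k => p ^ (j + 1 + k)) (i - 1)]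
      refine Finset.sum_congr rfl fun k hk => ?_
      rw [mem_range] at hk
      congr 1
      omega
    have hsplit : ∀ k, p ^ (j + 1 + k) = p ^ j * p ^ (k + 1) := by
      intro k
      rw [← pow_add]
      congr 1
      omega
    simp only [hG]
    rw [Finset.sum_sub_distrib, hrefl, Finset.sum_const, card_range, nsmul_eq_mul,
      Finset.sum_congr rfl fun k _ => hsplit k, ← Finset.mul_sum]
    have hc : ((i - 1 : ℕ) : ℝ) = (i : ℝ) - 1 := by
      push_cast [hi]
      ring
    rw [hc, pow_add]
    ring
  have hB : G i = p ^ j * (1 - p ^ i) := by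
    simp only [hG]
    have h1 : i + j - i = j := by omega
    rw [h1, pow_add]
    ring
  have hC : ((j - i : ℕ) : ℝ) = (j : ℝ) - (i : ℝ) := by
    push_cast [hij]
    ring
  rw [hA, hB, hC, ← alg_main p ((j : ℝ) - (i : ℝ)) i hi]
  ring

theorem main_aux (n i j : ℕ) [NeZero n] (hi : 1 ≤ i) (hj : 1 ≤ j) (hij : i ≤ j)
    (hn : 2 * j ≤ n) (p : ℝ) (hp0 : 0 < p) (hp1 : p < 1) :
    ∫ ω : Fin n → ℝ,
        ((∑ m : Fin n, ((∏ l ∈ Finset.range i, ω (m + (l : Fin n))) - p ^ i)) /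
            Real.sqrt (n * p ^ i * (1 - p))) *
        ((∑ m : Fin n, ((∏ l ∈ Finset.range j, ω (m + (l : Fin n))) - p ^ j)) /
            Real.sqrt (n * p ^ j * (1 - p)))
      ∂(Measure.pi fun _ : Fin n => muB p)
    = p ^ (((j : ℝ) - (i : ℝ)) / 2) *
        ∑ t ∈ Finset.range i, (((j : ℝ) - (i : ℝ) + 1 + 2 * (t : ℝ)) * p ^ t) := by
  have h1p : (0 : ℝ) < 1 - p := by linarith
  have hnpos : 0 < n := Nat.pos_of_ne_zero (NeZero.ne n)
  have hnR : (0 : ℝ) < n := by exact_mod_cast hnpos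
  have hin : i ≤ n := by omega
  have hjn : j ≤ n := by omega
  have hiijn : i + j ≤ n := by omega
  simp only [div_mul_div_comm]
  rw [integral_div, pi_muB_eq hp0.le hp1.le,
    integral_sum_dirac hp0.le hp1.le _
      (fun S => ENNReal.mul_ne_top (ENNReal.pow_ne_top ENNReal.ofReal_ne_top)
        (ENNReal.pow_ne_top ENNReal.ofReal_ne_top)) _]
  have hW : ∀ S : Finset (Fin n),
      ((ENNReal.ofReal p ^ S.card * ENNReal.ofReal (1 - p) ^ (n - S.card)).toReal)
        = p ^ S.card * (1 - p) ^ (n - S.card) := by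
    intro S
    rw [ENNReal.toReal_mul, ENNReal.toReal_pow, ENNReal.toReal_pow,
      ENNReal.toReal_ofReal hp0.le, ENNReal.toReal_ofReal (by linarith)]
  have key : ∀ S ∈ (Finset.univ : Finset (Finset (Fin n))),
      (ENNReal.ofReal p ^ S.card * ENNReal.ofReal (1 - p) ^ (n - S.card)).toReal *
        ((∑ m : Fin n, ((∏ l ∈ Finset.range i, chi S (m + (l : Fin n))) - p ^ i)) *
         (∑ m : Fin n, ((∏ l ∈ Finset.range j, chi S (m + (l : Fin n))) - p ^ j)))
      = ∑ m : Fin n, ∑ m' : Fin n,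
          p ^ S.card * (1 - p) ^ (n - S.card) *
            (((if arc m i ⊆ S then (1:ℝ) else 0) - p ^ i) *
             ((if arc m' j ⊆ S then (1:ℝ) else 0) - p ^ j)) := by
    intro S _
    have hAi : (∑ m : Fin n, ((∏ l ∈ Finset.range i, chi S (m + (l : Fin n))) - p ^ i))
        = ∑ m : Fin n, ((if arc m i ⊆ S then (1:ℝ) else 0) - p ^ i) :=
      Finset.sum_congr rfl fun m _ => by rw [chi_prod_arc hin S m]
    have hAj : (∑ m : Fin n, ((∏ l ∈ Finset.range j, chi S (m + (l : Fin n))) - p ^ j))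
        = ∑ m : Fin n, ((if arc m j ⊆ S then (1:ℝ) else 0) - p ^ j) :=
      Finset.sum_congr rfl fun m _ => by rw [chi_prod_arc hjn S m]
    rw [hW S, hAi, hAj]
    rw [Finset.sum_mul_sum, Finset.mul_sum]
    refine Finset.sum_congr rfl fun m _ => ?_
    rw [Finset.mul_sum]
  rw [Finset.sum_congr rfl key, Finset.sum_comm]
  rw [Finset.sum_congr rfl fun m (_ : m ∈ Finset.univ) => Finset.sum_comm]
  rw [Finset.sum_congr rfl fun m (_ : m ∈ Finset.univ) =>
    Finset.sum_congr rfl fun m' (_ : m' ∈ Finset.univ) => inner_sum_eval hin hjn hp0 hp1 m m']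
  have hds : ∑ m : Fin n, ∑ m' : Fin n, (p ^ ((arc m i ∪ arc m' j).card) - p ^ (i + j))
      = (n : ℝ) * ∑ s : Fin n, (p ^ ((arc 0 i ∪ arc s j).card) - p ^ (i + j)) :=
    double_sum_shift (fun c => p ^ c - p ^ (i + j))
  rw [hds, total_sum hi hij hiijn]
  -- final scalar identity
  have hC : Real.sqrt (n * p ^ i * (1 - p)) * Real.sqrt (n * p ^ j * (1 - p)) ≠ 0 := by
    positivity
  have e2 : p ^ (((j : ℝ) - (i : ℝ)) / 2) * p ^ (((i : ℝ) + (j : ℝ)) / 2) = p ^ (j : ℕ) := by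
    rw [← Real.rpow_add hp0, show ((j : ℝ) - (i : ℝ)) / 2 + ((i : ℝ) + (j : ℝ)) / 2 = (j : ℝ) by ring]
    exact Real.rpow_natCast p j
  have e1 : Real.sqrt (n * p ^ i * (1 - p)) * Real.sqrt (n * p ^ j * (1 - p))
      = ((n : ℝ) * (1 - p)) * p ^ (((i : ℝ) + (j : ℝ)) / 2) := by
    rw [← Real.sqrt_mul (by positivity)]
    rw [show (n : ℝ) * p ^ i * (1 - p) * ((n : ℝ) * p ^ j * (1 - p))
        = ((n : ℝ) * (1 - p)) ^ 2 * p ^ (i + j) by rw [pow_add]; ring]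
    rw [Real.sqrt_mul (by positivity), Real.sqrt_sq (by positivity)]
    congr 1
    rw [Real.sqrt_eq_rpow, ← Real.rpow_natCast p (i + j), ← Real.rpow_mul hp0.le]
    congr 1
    push_cast
    ring
  have hkey : (n : ℝ) * p ^ j * (1 - p)
      = p ^ (((j : ℝ) - (i : ℝ)) / 2) *
          (Real.sqrt (n * p ^ i * (1 - p)) * Real.sqrt (n * p ^ j * (1 - p))) := by
    rw [e1]
    linear_combination (-(n : ℝ) * (1 - p)) * e2
  rw [div_eq_iff hC]
  linear_combination (∑ t ∈ Finset.range i, (((j : ℝ) - (i : ℝ) + 1 + 2 * (t : ℝ)) * p ^ t)) * hkey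


/-- With `W_i = V_i / √(n p^i (1-p))` the standardized centered number of i-runs
in the cyclic Bernoulli setup,
`E[W_i W_j] = p^{|i-j|/2} ∑_{k=0}^{min(i,j)-1} (|i-j| + 1 + 2k) p^k`, independent of `n`. -/
theorem runs_standardized_covariance
    (n i j : ℕ) [NeZero n] (hi : 1 ≤ i) (hj : 1 ≤ j) (hn : 2 * max i j ≤ n)
    (p : ℝ) (hp0 : 0 < p) (hp1 : p < 1) :
    ∫ ω : Fin n → ℝ,
        ((∑ m : Fin n, ((∏ l ∈ Finset.range i, ω (m + (l : Fin n))) - p ^ i)) /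
            Real.sqrt (n * p ^ i * (1 - p))) *
        ((∑ m : Fin n, ((∏ l ∈ Finset.range j, ω (m + (l : Fin n))) - p ^ j)) /
            Real.sqrt (n * p ^ j * (1 - p)))
      ∂(Measure.pi fun _ : Fin n =>
          ENNReal.ofReal p • Measure.dirac (1 : ℝ) + ENNReal.ofReal (1 - p) • Measure.dirac 0)
    = p ^ (|(i : ℝ) - (j : ℝ)| / 2) *
        ∑ k ∈ Finset.range (min i j), (|(i : ℝ) - (j : ℝ)| + 1 + 2 * (k : ℝ)) * p ^ k := by
  rcases le_total i j with hij | hji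
  · have habs : |(i : ℝ) - (j : ℝ)| = (j : ℝ) - (i : ℝ) := by
      rw [abs_of_nonpos (by simp [sub_nonpos]; exact_mod_cast hij), neg_sub]
    rw [habs, min_eq_left hij]
    exact main_aux n i j hi hj hij (by omega) p hp0 hp1
  · have habs : |(i : ℝ) - (j : ℝ)| = (i : ℝ) - (j : ℝ) := by
      rw [abs_of_nonneg (by simp [sub_nonneg]; exact_mod_cast hji)]
    rw [habs, min_eq_right hji]
    calc ∫ ω : Fin n → ℝ,
        ((∑ m : Fin n, ((∏ l ∈ Finset.range i, ω (m + (l : Fin n))) - p ^ i)) /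
            Real.sqrt (n * p ^ i * (1 - p))) *
        ((∑ m : Fin n, ((∏ l ∈ Finset.range j, ω (m + (l : Fin n))) - p ^ j)) /
            Real.sqrt (n * p ^ j * (1 - p)))
      ∂(Measure.pi fun _ : Fin n =>
          ENNReal.ofReal p • Measure.dirac (1 : ℝ) + ENNReal.ofReal (1 - p) • Measure.dirac 0)
        = ∫ ω : Fin n → ℝ,
        ((∑ m : Fin n, ((∏ l ∈ Finset.range j, ω (m + (l : Fin n))) - p ^ j)) /
            Real.sqrt (n * p ^ j * (1 - p))) *
        ((∑ m : Fin n, ((∏ l ∈ Finset.range i, ω (m + (l : Fin n))) - p ^ i)) /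
            Real.sqrt (n * p ^ i * (1 - p)))
      ∂(Measure.pi fun _ : Fin n => muB p) := by
          refine integral_congr_ae (Filter.Eventually.of_forall fun ω => ?_)
          exact mul_comm _ _
      _ = p ^ (((i : ℝ) - (j : ℝ)) / 2) *
          ∑ t ∈ Finset.range j, (((i : ℝ) - (j : ℝ) + 1 + 2 * (t : ℝ)) * p ^ t) :=
        main_aux n j i hj hi hji (by omega) p hp0 hp1
end

section
/- Let a : {1,…,n}² → ℝ be a real array and π a uniform random permutation of {1,…,n}. Then the variance of the single-indexed permutation statistic V := Σ_{i=1}^n a_{i,π(i)} equals Var V = (1/(n-1)) Σ_{i,j=1}^n (a_{i,j} - a_{i,·} - a_{·,j} + a_{·,·})², where a_{i,·} = (1/n) Σ_j a_{i,j}, a_{·,j} = (1/n) Σ_i a_{i,j}, and a_{·,·} = (1/n²) Σ_{i,j} a_{i,j}. -/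
open MeasureTheory ProbabilityTheory

/-- The discrete σ-algebra on the finite permutation group. -/
instance permMeasurableSpace (n : ℕ) : MeasurableSpace (Equiv.Perm (Fin n)) := ⊤

section HVF
open Finset Equiv
variable {n : ℕ}


lemma fib1 (i j j' : Fin n) :
    (univ.filter fun π : Perm (Fin n) => π i = j).card
      = (univ.filter fun π : Perm (Fin n) => π i = j').card := by
  apply Finset.card_bij' (fun π _ => Equiv.swap j j' * π) (fun π _ => Equiv.swap j j' * π)
  · intro π hπ
    simp only [mem_filter, mem_univ, true_and] at hπ ⊢
    simp [Equiv.Perm.mul_apply, hπ]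
  · intro π hπ
    simp only [mem_filter, mem_univ, true_and] at hπ ⊢
    simp [Equiv.Perm.mul_apply, hπ, Equiv.swap_apply_right]
  · intro π hπ
    simp [← mul_assoc, Equiv.swap_mul_self]
  · intro π hπ
    simp [← mul_assoc, Equiv.swap_mul_self]

lemma count1 (i j : Fin n) :
    (univ.filter fun π : Perm (Fin n) => π i = j).card * n = Nat.factorial n := by
  have h := Finset.card_eq_sum_card_fiberwise
    (f := fun π : Perm (Fin n) => π i) (s := univ) (t := univ) (fun x _ => mem_univ _)
  rw [Finset.card_univ, Fintype.card_perm, Fintype.card_fin] at h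
  rw [h, Finset.sum_congr rfl (fun j' _ => (fib1 i j' j : _)), Finset.sum_const,
    Finset.card_univ, Fintype.card_fin, smul_eq_mul, mul_comm]

lemma exists2 {j l j' l' : Fin n} (h : j ≠ l) (h' : j' ≠ l') :
    ∃ σ : Perm (Fin n), σ j = j' ∧ σ l = l' := by
  refine ⟨Equiv.swap (Equiv.swap j j' l) l' * Equiv.swap j j', ?_, ?_⟩
  · simp only [Equiv.Perm.mul_apply, Equiv.swap_apply_left]
    rw [Equiv.swap_apply_of_ne_of_ne _ h']
    intro hc
    exact h ((Equiv.swap j j').injective (by rw [← hc, Equiv.swap_apply_left]))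
  · simp only [Equiv.Perm.mul_apply, Equiv.swap_apply_left]

lemma fib2 (i k : Fin n) {j l j' l' : Fin n} (hjl : j ≠ l) (hjl' : j' ≠ l') :
    (univ.filter fun π : Perm (Fin n) => π i = j ∧ π k = l).card
      = (univ.filter fun π : Perm (Fin n) => π i = j' ∧ π k = l').card := by
  obtain ⟨σ, hσ1, hσ2⟩ := exists2 hjl hjl'
  apply Finset.card_bij' (fun π _ => σ * π) (fun π _ => σ⁻¹ * π)
  · intro π hπ
    simp only [mem_filter, mem_univ, true_and] at hπ ⊢
    simp [Equiv.Perm.mul_apply, hπ.1, hπ.2, hσ1, hσ2]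
  · intro π hπ
    simp only [mem_filter, mem_univ, true_and] at hπ ⊢
    constructor
    · simp [Equiv.Perm.mul_apply, hπ.1, ← hσ1]
    · simp [Equiv.Perm.mul_apply, hπ.2, ← hσ2]
  · intro π hπ; simp [← mul_assoc]
  · intro π hπ; simp [← mul_assoc]

lemma count2 (i k : Fin n) (hik : i ≠ k) {j l : Fin n} (hjl : j ≠ l) :
    (univ.filter fun π : Perm (Fin n) => π i = j ∧ π k = l).card * (n * n - n) = Nat.factorial n := by
  have h := Finset.card_eq_sum_card_fiberwise
    (f := fun π : Perm (Fin n) => (π i, π k)) (s := univ) (t := univ.offDiag)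
    (fun π _ => Finset.mem_offDiag.2 ⟨mem_univ _, mem_univ _, fun hc => hik (π.injective hc)⟩)
  rw [Finset.card_univ, Fintype.card_perm, Fintype.card_fin] at h
  rw [h, Finset.sum_congr rfl (fun p hp => ?_), Finset.sum_const, Finset.offDiag_card,
    Finset.card_univ, Fintype.card_fin, smul_eq_mul, mul_comm]
  have hp' : p.1 ≠ p.2 := (Finset.mem_offDiag.1 hp).2.2
  have he : (univ.filter fun π : Perm (Fin n) => (π i, π k) = p)
      = univ.filter fun π : Perm (Fin n) => π i = p.1 ∧ π k = p.2 := by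
    ext π; simp [Prod.ext_iff]
  rw [he]
  exact fib2 i k hp' hjl


lemma fiber_sum {β : Type*} [Fintype β] [DecidableEq β] (f : Perm (Fin n) → β)
    (t : Finset β) (ht : ∀ π : Perm (Fin n), f π ∈ t) (g : Perm (Fin n) → ℝ) :
    ∑ π : Perm (Fin n), g π = ∑ b ∈ t, ∑ π ∈ univ.filter (fun π => f π = b), g π :=
  (Finset.sum_fiberwise_of_maps_to (fun π _ => ht π) g).symm

lemma sumA (i : Fin n) (f : Fin n → ℝ) :
    (n : ℝ) * ∑ π : Perm (Fin n), f (π i) = (Nat.factorial n : ℝ) * ∑ j, f j := by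
  rw [fiber_sum (fun π => π i) univ (fun _ => mem_univ _), Finset.mul_sum, Finset.mul_sum]
  refine Finset.sum_congr rfl fun j _ => ?_
  have h1 : ∑ π ∈ univ.filter (fun π : Perm (Fin n) => π i = j), f (π i)
      = ∑ π ∈ univ.filter (fun π : Perm (Fin n) => π i = j), f j :=
    Finset.sum_congr rfl fun π hπ => by rw [(Finset.mem_filter.1 hπ).2]
  rw [h1, Finset.sum_const, nsmul_eq_mul]
  have hc : (((univ.filter fun π : Perm (Fin n) => π i = j).card : ℕ) : ℝ) * n
      = Nat.factorial n := by rw [← Nat.cast_mul, count1]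
  linear_combination (f j) * hc

lemma sumB (i k : Fin n) (hik : i ≠ k) (f g : Fin n → ℝ) :
    ((n : ℝ) * n - n) * ∑ π : Perm (Fin n), f (π i) * g (π k)
      = (Nat.factorial n : ℝ) * ∑ p ∈ (univ : Finset (Fin n)).offDiag, f p.1 * g p.2 := by
  rw [fiber_sum (fun π => (π i, π k)) univ.offDiag
    (fun π => Finset.mem_offDiag.2 ⟨mem_univ _, mem_univ _, fun hc => hik (π.injective hc)⟩),
    Finset.mul_sum, Finset.mul_sum]
  refine Finset.sum_congr rfl fun p hp => ?_
  have hp' : p.1 ≠ p.2 := (Finset.mem_offDiag.1 hp).2.2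
  have h1 : ∑ π ∈ univ.filter (fun π : Perm (Fin n) => (π i, π k) = p), f (π i) * g (π k)
      = ∑ π ∈ univ.filter (fun π : Perm (Fin n) => (π i, π k) = p), f p.1 * g p.2 :=
    Finset.sum_congr rfl fun π hπ => by
      have := (Finset.mem_filter.1 hπ).2
      rw [Prod.ext_iff] at this
      rw [← this.1, ← this.2]
  have he : (univ.filter fun π : Perm (Fin n) => (π i, π k) = p)
      = univ.filter fun π : Perm (Fin n) => π i = p.1 ∧ π k = p.2 := by
    ext π; simp [Prod.ext_iff]
  have hc : ((univ.filter fun π : Perm (Fin n) => π i = p.1 ∧ π k = p.2).card : ℝ)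
      * ((n:ℝ) * n - n) = Nat.factorial n := by
    have h2 : ((n:ℝ) * n - n) = ((n * n - n : ℕ) : ℝ) := by
      have : n ≤ n * n := Nat.le_mul_of_pos_left n (Nat.pos_of_ne_zero ?hz) -- careful n could be 0
      · push_cast [Nat.cast_sub this]; ring
      case hz => rintro rfl; exact hp'.elim (Subsingleton.elim _ _)
    rw [h2, ← Nat.cast_mul, count2 i k hik hp']
  rw [h1, he, Finset.sum_const, nsmul_eq_mul]
  linear_combination (f p.1 * g p.2) * hc

lemma sum_offDiag' (F : Fin n → Fin n → ℝ) :
    ∑ p ∈ (univ : Finset (Fin n)).offDiag, F p.1 p.2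
      = (∑ i, ∑ k, F i k) - ∑ i, F i i := by
  have h1 : ∑ i, ∑ k, F i k = ∑ p ∈ (univ : Finset (Fin n)) ×ˢ univ, F p.1 p.2 := by
    rw [Finset.sum_product]
  have h2 : (univ : Finset (Fin n)).offDiag
      = (univ ×ˢ univ).filter (fun p => ¬ p.1 = p.2) := by
    ext p; simp [Finset.mem_offDiag]
  have h3 : ∑ i, F i i = ∑ p ∈ (univ ×ˢ univ).filter (fun p : Fin n × Fin n => p.1 = p.2),
      F p.1 p.2 := by
    refine Finset.sum_nbij' (fun i => (i, i)) (fun p => p.1) ?_ ?_ ?_ ?_ ?_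
    · intro i _; simp
    · intro p hp; simp
    · intro i _; rfl
    · rintro ⟨x, y⟩ hp
      simp only [Finset.mem_filter] at hp
      simp [hp.2]
    · intro i _; rfl
  rw [h1, h2, h3, eq_sub_iff_add_eq, add_comm, Finset.sum_filter_add_sum_filter_not]



/-- Hoeffding's variance formula: For `π` a uniform random permutation of
`{1,…,n}`, `n ≥ 2`, the statistic `V = ∑ i, a i (π i)` satisfies
`Var V = (1/(n-1)) ∑_{i,j} (a_{ij} - a_{i·} - a_{·j} + a_{··})²`. -/
theorem hoeffding_variance_formula
    (n : ℕ) (hn : 2 ≤ n) (a : Fin n → Fin n → ℝ) :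
    variance (fun π : Equiv.Perm (Fin n) => ∑ i, a i (π i))
        (PMF.uniformOfFintype (Equiv.Perm (Fin n))).toMeasure
      = (1 / ((n : ℝ) - 1)) * ∑ i, ∑ j,
          (a i j - (1 / (n : ℝ)) * ∑ t, a i t - (1 / (n : ℝ)) * ∑ s, a s j
            + (1 / (n : ℝ) ^ 2) * ∑ s, ∑ t, a s t) ^ 2 := by
  classical
  haveI : MeasurableSingletonClass (Equiv.Perm (Fin n)) := ⟨fun _ => trivial⟩
  have hn2 : (2:ℝ) ≤ (n:ℝ) := by exact_mod_cast hn
  have hN : (n:ℝ) ≠ 0 := by linarith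
  have hN1 : (n:ℝ) - 1 ≠ 0 := by linarith
  have hNN : (n:ℝ) * n - n ≠ 0 := by nlinarith
  have hF : (Nat.factorial n : ℝ) ≠ 0 := Nat.cast_ne_zero.2 (Nat.factorial_ne_zero n)
  set μ := (PMF.uniformOfFintype (Equiv.Perm (Fin n))).toMeasure with hμ
  set V := fun π : Equiv.Perm (Fin n) => ∑ i, a i (π i) with hV
  have hmeas : AEStronglyMeasurable V μ := (measurable_of_finite V).aestronglyMeasurable
  have hMem : MemLp V 2 μ :=
    MemLp.of_bound hmeas (∑ π, ‖V π‖) (ae_of_all _ fun π =>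
      Finset.single_le_sum (f := fun π => ‖V π‖) (fun _ _ => norm_nonneg _) (mem_univ π))
  rw [variance_eq_sub hMem]
  have hint : ∀ f : Equiv.Perm (Fin n) → ℝ,
      ∫ π, f π ∂μ = (Nat.factorial n : ℝ)⁻¹ * ∑ π, f π := by
    intro f
    rw [hμ, PMF.integral_eq_sum, Finset.mul_sum]
    refine Finset.sum_congr rfl fun π _ => ?_
    rw [PMF.uniformOfFintype_apply, smul_eq_mul]
    congr 1
    rw [ENNReal.toReal_inv]
    simp [Fintype.card_perm, Fintype.card_fin]
  rw [hint (V ^ 2), hint V]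
  simp only [Pi.pow_apply]
  -- abbreviations (as equations)
  have hT2 : ∑ j, ∑ s, a s j = ∑ s, ∑ t, a s t := Finset.sum_comm
  -- first moment
  have hS1 : (n:ℝ) * ∑ π : Perm (Fin n), V π
      = (Nat.factorial n : ℝ) * ∑ s, ∑ t, a s t := by
    have h0 : ∑ π : Perm (Fin n), V π = ∑ i, ∑ π : Perm (Fin n), a i (π i) :=
      Finset.sum_comm
    rw [h0, Finset.mul_sum, Finset.sum_congr rfl fun i _ => sumA i (a i), ← Finset.mul_sum]
  -- second moment pieces
  have hS2 : ∑ π : Perm (Fin n), (V π)^2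
      = ∑ i, ∑ k, ∑ π : Perm (Fin n), a i (π i) * a k (π k) := by
    have h0 : ∀ π : Perm (Fin n), (V π)^2 = ∑ i, ∑ k, a i (π i) * a k (π k) := by
      intro π; rw [sq, hV]; exact Finset.sum_mul_sum _ _ _ _
    rw [Finset.sum_congr rfl fun π _ => h0 π, Finset.sum_comm]
    exact Finset.sum_congr rfl fun i _ => Finset.sum_comm
  have hS2' : ∑ π : Perm (Fin n), (V π)^2
      = (Nat.factorial n : ℝ) * (∑ i, ∑ j, a i j * a i j) / n
        + (Nat.factorial n : ℝ) * (∑ p ∈ (univ : Finset (Fin n)).offDiag,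
            ∑ q ∈ (univ : Finset (Fin n)).offDiag, a p.1 q.1 * a p.2 q.2) / ((n:ℝ) * n - n) := by
    rw [hS2]
    have hsplit := sum_offDiag' (fun i k => ∑ π : Perm (Fin n), a i (π i) * a k (π k))
    have hdiag : ∑ i, ∑ π : Perm (Fin n), a i (π i) * a i (π i)
        = (Nat.factorial n : ℝ) * (∑ i, ∑ j, a i j * a i j) / n := by
      rw [eq_div_iff hN, Finset.sum_mul, Finset.mul_sum]
      refine Finset.sum_congr rfl fun i _ => ?_
      linear_combination sumA i (fun j => a i j * a i j)
    have hoffd : ∑ p ∈ (univ : Finset (Fin n)).offDiag,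
        ∑ π : Perm (Fin n), a p.1 (π p.1) * a p.2 (π p.2)
        = (Nat.factorial n : ℝ) * (∑ p ∈ (univ : Finset (Fin n)).offDiag,
            ∑ q ∈ (univ : Finset (Fin n)).offDiag, a p.1 q.1 * a p.2 q.2) / ((n:ℝ) * n - n) := by
      rw [eq_div_iff hNN, Finset.sum_mul, Finset.mul_sum]
      refine Finset.sum_congr rfl fun p hp => ?_
      have hp' : p.1 ≠ p.2 := (Finset.mem_offDiag.1 hp).2.2
      linear_combination sumB p.1 p.2 hp' (a p.1) (a p.2)
    linarith [hsplit, hdiag, hoffd]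
  have hP : ∑ p ∈ (univ : Finset (Fin n)).offDiag, ∑ q ∈ (univ : Finset (Fin n)).offDiag,
      a p.1 q.1 * a p.2 q.2
      = (∑ s, ∑ t, a s t) * (∑ s, ∑ t, a s t)
        - (∑ j, (∑ s, a s j) * (∑ s, a s j))
        - (∑ i, (∑ t, a i t) * (∑ t, a i t))
        + ∑ i, ∑ j, a i j * a i j := by
    have hin : ∀ i k : Fin n, ∑ q ∈ (univ : Finset (Fin n)).offDiag, a i q.1 * a k q.2
        = (∑ t, a i t) * (∑ t, a k t) - ∑ j, a i j * a k j := by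
      intro i k
      rw [sum_offDiag' (fun j l => a i j * a k l), Finset.sum_mul_sum]
    have houter := sum_offDiag' (fun i k => (∑ t, a i t) * (∑ t, a k t) - ∑ j, a i j * a k j)
    rw [Finset.sum_congr rfl fun p _ => hin p.1 p.2, houter]
    have e1 : ∑ i, ∑ k, ((∑ t, a i t) * (∑ t, a k t) - ∑ j, a i j * a k j)
        = (∑ s, ∑ t, a s t) * (∑ s, ∑ t, a s t) - ∑ j, (∑ s, a s j) * (∑ s, a s j) := by
      rw [Finset.sum_congr rfl fun i (_ : i ∈ univ) => Finset.sum_sub_distrib _ _,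
        Finset.sum_sub_distrib]
      congr 1
      · exact ((Finset.sum_mul_sum univ univ (fun i => ∑ t, a i t) (fun k => ∑ t, a k t)).symm)
      · calc ∑ i, ∑ k, ∑ j, a i j * a k j
            = ∑ i, ∑ j, ∑ k, a i j * a k j :=
              Finset.sum_congr rfl fun i _ => Finset.sum_comm
          _ = ∑ j, ∑ i, ∑ k, a i j * a k j := Finset.sum_comm
          _ = ∑ j, (∑ s, a s j) * (∑ s, a s j) := Finset.sum_congr rfl fun j _ =>
              (Finset.sum_mul_sum univ univ (fun i => a i j) (fun k => a k j)).symm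
    have e2 : ∑ i, ((∑ t, a i t) * (∑ t, a i t) - ∑ j, a i j * a i j)
        = (∑ i, (∑ t, a i t) * (∑ t, a i t)) - ∑ i, ∑ j, a i j * a i j :=
      Finset.sum_sub_distrib _ _
    rw [e1, e2]; ring
  have hrow : ∀ i, ∑ j, (a i j - 1 / (n:ℝ) * ∑ t, a i t - 1 / (n:ℝ) * ∑ s, a s j + 1 / (n:ℝ) ^ 2 * ∑ s, ∑ t, a s t) = 0 := by
    intro i
    rw [Finset.sum_add_distrib, Finset.sum_sub_distrib, Finset.sum_sub_distrib,
      ← Finset.mul_sum, ← Finset.mul_sum, ← Finset.mul_sum, hT2, Finset.sum_const,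
      Finset.sum_const, Finset.card_univ, Fintype.card_fin, nsmul_eq_mul, nsmul_eq_mul]
    field_simp
    ring
  have hcol : ∀ j, ∑ i, (a i j - 1 / (n:ℝ) * ∑ t, a i t - 1 / (n:ℝ) * ∑ s, a s j + 1 / (n:ℝ) ^ 2 * ∑ s, ∑ t, a s t) = 0 := by
    intro j
    rw [Finset.sum_add_distrib, Finset.sum_sub_distrib, Finset.sum_sub_distrib,
      ← Finset.mul_sum, ← Finset.mul_sum, ← Finset.mul_sum, Finset.sum_const,
      Finset.sum_const, Finset.card_univ, Fintype.card_fin, nsmul_eq_mul, nsmul_eq_mul]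
    field_simp
    ring
  have hRHS : ∑ i, ∑ j, (a i j - 1 / (n:ℝ) * ∑ t, a i t - 1 / (n:ℝ) * ∑ s, a s j + 1 / (n:ℝ) ^ 2 * ∑ s, ∑ t, a s t) ^ 2
      = (∑ i, ∑ j, a i j * a i j)
        - (∑ i, (∑ t, a i t) * (∑ t, a i t)) / n
        - (∑ j, (∑ s, a s j) * (∑ s, a s j)) / n
        + (∑ s, ∑ t, a s t) * (∑ s, ∑ t, a s t) / ((n:ℝ) * n) := by
    have d1 : ∑ i, ∑ j, ((a i j - 1 / (n:ℝ) * ∑ t, a i t - 1 / (n:ℝ) * ∑ s, a s j + 1 / (n:ℝ) ^ 2 * ∑ s, ∑ t, a s t) * ∑ t, a i t) = 0 :=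
      Finset.sum_eq_zero fun i _ => by rw [← Finset.sum_mul, hrow i, zero_mul]
    have d2 : ∑ i, ∑ j, ((a i j - 1 / (n:ℝ) * ∑ t, a i t - 1 / (n:ℝ) * ∑ s, a s j + 1 / (n:ℝ) ^ 2 * ∑ s, ∑ t, a s t) * ∑ s, a s j) = 0 := by
      rw [Finset.sum_comm]
      exact Finset.sum_eq_zero fun j _ => by rw [← Finset.sum_mul, hcol j, zero_mul]
    have d3 : ∑ i, ∑ j, ((a i j - 1 / (n:ℝ) * ∑ t, a i t - 1 / (n:ℝ) * ∑ s, a s j + 1 / (n:ℝ) ^ 2 * ∑ s, ∑ t, a s t) * ∑ s, ∑ t, a s t) = 0 :=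
      Finset.sum_eq_zero fun i _ => by rw [← Finset.sum_mul, hrow i, zero_mul]
    have step1 : ∑ i, ∑ j, (a i j - 1 / (n:ℝ) * ∑ t, a i t - 1 / (n:ℝ) * ∑ s, a s j + 1 / (n:ℝ) ^ 2 * ∑ s, ∑ t, a s t) ^ 2 = ∑ i, ∑ j, ((a i j - 1 / (n:ℝ) * ∑ t, a i t - 1 / (n:ℝ) * ∑ s, a s j + 1 / (n:ℝ) ^ 2 * ∑ s, ∑ t, a s t) * a i j) := by
      have e0 : ∀ i : Fin n, ∀ j : Fin n, (a i j - 1 / (n:ℝ) * ∑ t, a i t - 1 / (n:ℝ) * ∑ s, a s j + 1 / (n:ℝ) ^ 2 * ∑ s, ∑ t, a s t) ^ 2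
          = ((a i j - 1 / (n:ℝ) * ∑ t, a i t - 1 / (n:ℝ) * ∑ s, a s j + 1 / (n:ℝ) ^ 2 * ∑ s, ∑ t, a s t) * a i j) - 1 / (n:ℝ) * ((a i j - 1 / (n:ℝ) * ∑ t, a i t - 1 / (n:ℝ) * ∑ s, a s j + 1 / (n:ℝ) ^ 2 * ∑ s, ∑ t, a s t) * ∑ t, a i t)
            - 1 / (n:ℝ) * ((a i j - 1 / (n:ℝ) * ∑ t, a i t - 1 / (n:ℝ) * ∑ s, a s j + 1 / (n:ℝ) ^ 2 * ∑ s, ∑ t, a s t) * ∑ s, a s j)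
            + 1 / (n:ℝ) ^ 2 * ((a i j - 1 / (n:ℝ) * ∑ t, a i t - 1 / (n:ℝ) * ∑ s, a s j + 1 / (n:ℝ) ^ 2 * ∑ s, ∑ t, a s t) * ∑ s, ∑ t, a s t) := fun i j => by ring
      rw [Finset.sum_congr rfl fun i _ => Finset.sum_congr rfl fun j _ => e0 i j]
      simp only [Finset.sum_add_distrib, Finset.sum_sub_distrib, ← Finset.mul_sum]
      rw [d1, d2, d3]; ring
    have e2 : ∀ i : Fin n, ∀ j : Fin n, (a i j - 1 / (n:ℝ) * ∑ t, a i t - 1 / (n:ℝ) * ∑ s, a s j + 1 / (n:ℝ) ^ 2 * ∑ s, ∑ t, a s t) * a i j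
        = a i j * a i j - 1 / (n:ℝ) * ((∑ t, a i t) * a i j)
          - 1 / (n:ℝ) * ((∑ s, a s j) * a i j)
          + 1 / (n:ℝ) ^ 2 * ((∑ s, ∑ t, a s t) * a i j) := fun i j => by ring
    rw [step1, Finset.sum_congr rfl fun i _ => Finset.sum_congr rfl fun j _ => e2 i j]
    have u2 : ∑ i, ∑ j, ((∑ s, a s j) * a i j) = ∑ j, (∑ s, a s j) * (∑ s, a s j) := by
      rw [Finset.sum_comm]
      exact Finset.sum_congr rfl fun j _ => by rw [← Finset.mul_sum]
    simp only [Finset.sum_add_distrib, Finset.sum_sub_distrib, ← Finset.mul_sum]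
    rw [u2]
    field_simp
  have hS1' : ∑ π : Perm (Fin n), V π
      = (Nat.factorial n : ℝ) * (∑ s, ∑ t, a s t) / n := by
    rw [eq_div_iff hN]; linear_combination hS1
  rw [hS2', hP, hRHS, hS1']
  field_simp
  ring
end HVF
end

section
/- Let Σ be a positive definite d×d matrix and Λ an invertible d×d matrix. Then the matrix Σ̃ := (1/2)(Λ Σ Λ^{-t} + Σ) equals Σ if and only if Λ̂ := Σ^{-1/2} Λ Σ^{1/2} is symmetric, where Λ^{-t} denotes the transpose of Λ^{-1}. -/
open Matrix

/-- For `Sig` positive definite with symmetric positive definite square root `Q`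
and `Λ` invertible, `(1/2)(Λ Sig Λ^{-t} + Sig) = Sig` iff `Q⁻¹ Λ Q` is symmetric. -/
theorem sigma_tilde_eq_sigma_iff_lambda_hat_symm
    (d : ℕ) (Sig Λ Q : Matrix (Fin d) (Fin d) ℝ)
    (hSig : Sig.PosDef) (hΛ : IsUnit Λ.det)
    (hQ : Q.PosDef) (hQsq : Q * Q = Sig) :
    (1/2 : ℝ) • (Λ * Sig * (Λ⁻¹)ᵀ + Sig) = Sig ↔ (Q⁻¹ * Λ * Q).IsSymm := by
  have hQd : IsUnit Q.det := isUnit_iff_ne_zero.mpr hQ.det_pos.ne'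
  have hQs : Qᵀ = Q := hQ.isHermitian
  have hQinv : Q⁻¹ * Q = 1 := nonsing_inv_mul Q hQd
  have hQinv' : Q * Q⁻¹ = 1 := mul_nonsing_inv Q hQd
  have hΛinv' : Λ * Λ⁻¹ = 1 := mul_nonsing_inv Λ hΛ
  have hΛinv : Λ⁻¹ * Λ = 1 := nonsing_inv_mul Λ hΛ
  have hQst : (Q⁻¹)ᵀ = Q⁻¹ := by rw [transpose_nonsing_inv, hQs]
  have hc : ∀ X : Matrix (Fin d) (Fin d) ℝ, Q⁻¹ * (Q * X) = X := fun X => by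
    rw [← Matrix.mul_assoc, hQinv, Matrix.one_mul]
  have hc' : ∀ X : Matrix (Fin d) (Fin d) ℝ, Q * (Q⁻¹ * X) = X := fun X => by
    rw [← Matrix.mul_assoc, hQinv', Matrix.one_mul]
  have hstep1 : ((1/2 : ℝ) • (Λ * Sig * (Λ⁻¹)ᵀ + Sig) = Sig) ↔ Λ * Sig * (Λ⁻¹)ᵀ = Sig := by
    constructor
    · intro h
      have h2 := congrArg (fun M => (2:ℝ) • M) h
      simp only [smul_smul] at h2
      norm_num at h2
      have h3 : Λ * Sig * (Λ⁻¹)ᵀ + Sig = Sig + Sig := by rw [h2, two_smul]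
      exact add_right_cancel h3
    · intro h; rw [h, ← two_smul ℝ Sig, smul_smul]; norm_num
  have hstep2 : (Λ * Sig * (Λ⁻¹)ᵀ = Sig) ↔ Λ * Sig = Sig * Λᵀ := by
    constructor
    · intro h
      have h2 := congrArg (fun M => M * Λᵀ) h
      simpa [Matrix.mul_assoc, ← transpose_mul, hΛinv'] using h2
    · intro h
      calc Λ * Sig * (Λ⁻¹)ᵀ = Sig * Λᵀ * (Λ⁻¹)ᵀ := by rw [h]
        _ = Sig * (Λ⁻¹ * Λ)ᵀ := by rw [Matrix.mul_assoc, ← transpose_mul]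
        _ = Sig := by rw [hΛinv, transpose_one, Matrix.mul_one]
  rw [hstep1, hstep2, Matrix.IsSymm]
  have hT : (Q⁻¹ * Λ * Q)ᵀ = Q * Λᵀ * Q⁻¹ := by
    rw [transpose_mul, transpose_mul, hQs, hQst, Matrix.mul_assoc]
  rw [hT]
  constructor
  · intro h
    have hQQ : Λ * (Q * Q) = Q * Q * Λᵀ := by rw [hQsq]; exact h
    have h2 := congrArg (fun M => Q⁻¹ * M * Q⁻¹) hQQ
    simp only [Matrix.mul_assoc, hQinv', Matrix.mul_one, hc] at h2
    simp only [Matrix.mul_assoc]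
    exact h2.symm
  · intro h
    rw [← hQsq]
    have h2 := congrArg (fun M => Q * M * Q) h
    simp only [Matrix.mul_assoc, hQinv, Matrix.mul_one, hc'] at h2
    simp only [← Matrix.mul_assoc] at h2 ⊢
    exact h2.symm
end
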